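/- Fix an integer n ≥ 2 and let M = 1/ρ_min(n). Then M ≤ u_Opt(n,0) ≤ n²·⌈log₂ n⌉·M; that is, the minimum size of a dyadic hitter in X_n is at least M and at most n²⌈log₂ n⌉·M. -/

import Mathlib

namespace TQ

/-- A decision tree: internal nodes are labeled by questions (subsets of `α`,
with the two children corresponding to Yes/No), leaves by elements of `α`. -/
inductive DTree (α : Type) where
  | leaf (x : α) : DTree α
  | node (q : Finset α) (yes no : DTree α) : DTree α

namespace DTree

variable {α : Type} [DecidableEq α]

/-- The list of leaf labels of a decision tree. -/
def leaves : DTree α → List α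
  | .leaf x => [x]
  | .node _ t f => leaves t ++ leaves f

/-- The set of questions appearing at internal nodes. -/
def questions : DTree α → Set (Finset α)
  | .leaf _ => ∅
  | .node q t f => insert q (questions t ∪ questions f)

/-- Follow the path of `x` (Yes-edge iff `x` belongs to the question);
returns `some d` iff the path ends at a leaf labeled `x`, at depth `d`. -/
def find? : DTree α → α → Option ℕ
  | .leaf y, x => if y = x then some 0 else none
  | .node q t f, x => (if x ∈ q then find? t x else find? f x).map (· + 1)

/-- The depth of the leaf labeled `x` (junk value `0` if the path of `x`
does not end at a leaf labeled `x`). -/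
def depth (T : DTree α) (x : α) : ℕ := (T.find? x).getD 0

end DTree

variable {α : Type} [Fintype α] [DecidableEq α]

/-- `μ` is a probability distribution on `α`. -/
def IsDistribution (μ : α → ℝ) : Prop := (∀ x, 0 ≤ μ x) ∧ ∑ x, μ x = 1

/-- `T` is valid for `μ`: its leaves are distinct, the set of leaf labels is the
support of `μ`, and for every `x` in the support the path of `x` ends at the
leaf labeled `x`. -/
structure IsValid (T : DTree α) (μ : α → ℝ) : Prop where
  nodup : T.leaves.Nodup
  mem_leaves : ∀ x, x ∈ T.leaves ↔ μ x ≠ 0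
  finds : ∀ x, μ x ≠ 0 → T.find? x = some (T.depth x)

/-- The cost of `T` on `μ`: the average depth `∑ x, μ(x) · T(x)`. -/
noncomputable def cost (T : DTree α) (μ : α → ℝ) : ℝ := ∑ x, μ x * (T.depth x : ℝ)

/-- All questions of `T` belong to `Q`. -/
def UsesQuestions (T : DTree α) (Q : Set (Finset α)) : Prop := T.questions ⊆ Q

/-- `Opt(μ)`: the optimal cost over all decision trees valid for `μ`. -/
noncomputable def OptCost (μ : α → ℝ) : ℝ :=
  sInf { c | ∃ T : DTree α, IsValid T μ ∧ c = cost T μ }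

/-- `c_Q(μ)`: the optimal cost over decision trees valid for `μ`
using only questions from `Q`. -/
noncomputable def cQ (Q : Set (Finset α)) (μ : α → ℝ) : ℝ :=
  sInf { c | ∃ T : DTree α, IsValid T μ ∧ UsesQuestions T Q ∧ c = cost T μ }

/-- The base-2 (Shannon) entropy of `μ`. (Note `Real.logb 2 0 = 0`.) -/
noncomputable def entropy (μ : α → ℝ) : ℝ := ∑ x, -(μ x * Real.logb 2 (μ x))

/-- `Q` achieves prolixity `r`: for every distribution there is a valid tree using
only questions from `Q` of cost at most `Opt(μ) + r`. -/
def AchievesProlixity {n : ℕ} (Q : Finset (Finset (Fin n))) (r : ℝ) : Prop :=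
  ∀ μ : Fin n → ℝ, IsDistribution μ →
    ∃ T : DTree (Fin n), IsValid T μ ∧ UsesQuestions T ↑Q ∧ cost T μ ≤ OptCost μ + r

/-- `Q` achieves redundancy `r`: for every distribution there is a valid tree using
only questions from `Q` of cost at most `H(μ) + r`. -/
def AchievesRedundancy {n : ℕ} (Q : Finset (Finset (Fin n))) (r : ℝ) : Prop :=
  ∀ μ : Fin n → ℝ, IsDistribution μ →
    ∃ T : DTree (Fin n), IsValid T μ ∧ UsesQuestions T ↑Q ∧ cost T μ ≤ entropy μ + r

/-- `u_Opt(n,r)`: the minimum cardinality of a set of questions achieving prolixity `r`. -/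
noncomputable def uOpt (n : ℕ) (r : ℝ) : ℕ :=
  sInf { k | ∃ Q : Finset (Finset (Fin n)), Q.card = k ∧ AchievesProlixity Q r }

/-- `u_H(n,r)`: the minimum cardinality of a set of questions achieving redundancy `r`. -/
noncomputable def uH (n : ℕ) (r : ℝ) : ℕ :=
  sInf { k | ∃ Q : Finset (Finset (Fin n)), Q.card = k ∧ AchievesRedundancy Q r }

end TQ

namespace TQ

/-- `μ` is dyadic: every probability is `0` or an integer power of `1/2`. -/
def IsDyadic {α : Type} (μ : α → ℝ) : Prop :=
  ∀ x, μ x = 0 ∨ ∃ d : ℤ, μ x = (1 / 2 : ℝ) ^ d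

/-- `μ` is non-constant: its support has at least two elements. -/
def NonConstant {α : Type} (μ : α → ℝ) : Prop :=
  ∃ x y, x ≠ y ∧ μ x ≠ 0 ∧ μ y ≠ 0

end TQ

namespace TQ

open scoped Classical in
/-- The splitters of `μ`: the subsets of probability exactly `1/2` (the dyadic set `D(μ)`). -/
noncomputable def splitters (n : ℕ) (μ : Fin n → ℝ) : Finset (Finset (Fin n)) :=
  Finset.univ.filter (fun A => ∑ x ∈ A, μ x = 1 / 2)

/-- `ρ_i(D) = |{S ∈ D : |S| = i}| / C(n,i)`. -/
noncomputable def relDensity (n : ℕ) (D : Finset (Finset (Fin n))) (i : ℕ) : ℝ :=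
  ((D.filter (fun S => S.card = i)).card : ℝ) / (n.choose i : ℝ)

/-- `ρ(D) = max_{1 ≤ i ≤ n-1} ρ_i(D)`, the maximum relative density. -/
noncomputable def maxRelDensity (n : ℕ) (D : Finset (Finset (Fin n))) : ℝ :=
  ⨆ i ∈ Finset.Ico 1 n, relDensity n D i

/-- `ρ_min(n)`: the minimum of `ρ(D(μ))` over non-constant dyadic distributions `μ`. -/
noncomputable def rhoMin (n : ℕ) : ℝ :=
  sInf { ρ | ∃ μ : Fin n → ℝ, IsDistribution μ ∧ IsDyadic μ ∧ NonConstant μ ∧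
    ρ = maxRelDensity n (splitters n μ) }

end TQ


namespace TQ
namespace DTree
variable {α : Type} [DecidableEq α]

theorem mem_leaves_of_find? {T : DTree α} {x : α} {k : ℕ} (h : T.find? x = some k) :
    x ∈ T.leaves := by
  induction T generalizing k with
  | leaf y =>
    simp only [find?] at h
    split at h
    · simp [leaves, *]
    · exact absurd h (by simp)
  | node q t f iht ihf =>
    simp only [find?, Option.map_eq_some_iff] at h
    obtain ⟨a, ha, -⟩ := h
    simp only [leaves, List.mem_append]
    split at ha
    · exact Or.inl (iht ha)
    · exact Or.inr (ihf ha)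

/-- A tree is good if leaves are distinct and each leaf's path reaches itself. -/
def Good (T : DTree α) : Prop := T.leaves.Nodup ∧ ∀ x ∈ T.leaves, ∃ k, T.find? x = some k

theorem good_node {q : Finset α} {t f : DTree α} (h : Good (node q t f)) :
    Good t ∧ Good f ∧ (∀ x ∈ t.leaves, x ∈ q) ∧ (∀ x ∈ f.leaves, x ∉ q) := by
  obtain ⟨hnd, hfind⟩ := h
  simp only [leaves, List.nodup_append] at hnd
  obtain ⟨hnt, hnf, hdisj⟩ := hnd
  have key : ∀ x ∈ t.leaves, x ∈ q ∧ ∃ k, t.find? x = some k := by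
    intro x hx
    obtain ⟨k, hk⟩ := hfind x (by simp [leaves, hx])
    simp only [find?, Option.map_eq_some_iff] at hk
    obtain ⟨a, ha, -⟩ := hk
    by_cases hq : x ∈ q
    · rw [if_pos hq] at ha; exact ⟨hq, a, ha⟩
    · rw [if_neg hq] at ha
      exact absurd hx (fun hx => (hdisj x hx x (mem_leaves_of_find? ha) rfl).elim)
  have key' : ∀ x ∈ f.leaves, (¬ x ∈ q) ∧ ∃ k, f.find? x = some k := by
    intro x hx
    obtain ⟨k, hk⟩ := hfind x (by simp [leaves, hx])
    simp only [find?, Option.map_eq_some_iff] at hk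
    obtain ⟨a, ha, -⟩ := hk
    by_cases hq : x ∈ q
    · rw [if_pos hq] at ha
      exact absurd hx (fun hx => (hdisj x (mem_leaves_of_find? ha) x hx rfl).elim)
    · rw [if_neg hq] at ha; exact ⟨hq, a, ha⟩
  exact ⟨⟨hnt, fun x hx => (key x hx).2⟩, ⟨hnf, fun x hx => (key' x hx).2⟩,
    fun x hx => (key x hx).1, fun x hx => (key' x hx).1⟩

theorem depth_node_yes {q : Finset α} {t f : DTree α} (h : Good (node q t f))
    {x : α} (hx : x ∈ t.leaves) : (node q t f).depth x = t.depth x + 1 := by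
  obtain ⟨⟨-, hft⟩, -, hq, -⟩ := good_node h
  obtain ⟨k, hk⟩ := hft x hx
  simp [depth, find?, hq x hx, hk]

theorem depth_node_no {q : Finset α} {t f : DTree α} (h : Good (node q t f))
    {x : α} (hx : x ∈ f.leaves) : (node q t f).depth x = f.depth x + 1 := by
  obtain ⟨-, ⟨-, hff⟩, -, hq⟩ := good_node h
  obtain ⟨k, hk⟩ := hff x hx
  simp [depth, find?, hq x hx, hk]

theorem kraft (T : DTree α) (h : Good T) :
    ∑ x ∈ T.leaves.toFinset, ((1:ℝ)/2) ^ T.depth x = 1 := by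
  induction T with
  | leaf y => simp [leaves, depth, find?]
  | node q t f iht ihf =>
    obtain ⟨hgt, hgf, -, -⟩ := good_node h
    have hdisj : Disjoint t.leaves.toFinset f.leaves.toFinset := by
      have := h.1
      simp only [leaves, List.nodup_append] at this
      rw [Finset.disjoint_left]
      intro a ha hb
      exact this.2.2 a (List.mem_toFinset.1 ha) a (List.mem_toFinset.1 hb) rfl
    have : (node q t f).leaves.toFinset = t.leaves.toFinset ∪ f.leaves.toFinset := by
      simp [leaves]
    rw [this, Finset.sum_union hdisj]
    have ht : ∑ x ∈ t.leaves.toFinset, ((1:ℝ)/2) ^ (node q t f).depth x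
        = (1/2) * ∑ x ∈ t.leaves.toFinset, ((1:ℝ)/2) ^ t.depth x := by
      rw [Finset.mul_sum]
      refine Finset.sum_congr rfl fun x hx => ?_
      rw [depth_node_yes h (List.mem_toFinset.1 hx), pow_succ]
      ring
    have hf : ∑ x ∈ f.leaves.toFinset, ((1:ℝ)/2) ^ (node q t f).depth x
        = (1/2) * ∑ x ∈ f.leaves.toFinset, ((1:ℝ)/2) ^ f.depth x := by
      rw [Finset.mul_sum]
      refine Finset.sum_congr rfl fun x hx => ?_
      rw [depth_node_no h (List.mem_toFinset.1 hx), pow_succ]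
      ring
    rw [ht, hf, iht hgt, ihf hgf]
    norm_num

end DTree

variable {α : Type} [DecidableEq α]

/-- A Kraft-equality depth profile on `S`. -/
def IsKraft (S : Finset α) (d : α → ℕ) : Prop := ∑ x ∈ S, ((1:ℝ)/2) ^ d x = 1

theorem half_pow_pos (k : ℕ) : (0:ℝ) < ((1:ℝ)/2) ^ k := by positivity

theorem kraft_one_le {S : Finset α} {d : α → ℕ} (hk : IsKraft S d) (h2 : 2 ≤ S.card)
    {x : α} (hx : x ∈ S) : 1 ≤ d x := by
  by_contra h
  have hdx : d x = 0 := by omega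
  have hne : (S.erase x).Nonempty := by
    rw [← Finset.card_pos, Finset.card_erase_of_mem hx]; omega
  have h1 := Finset.add_sum_erase S (fun z => ((1:ℝ)/2)^(d z)) hx
  have h2' : (0:ℝ) < ∑ z ∈ S.erase x, ((1:ℝ)/2)^(d z) :=
    Finset.sum_pos (fun z _ => half_pow_pos _) hne
  have hk' := hk
  unfold IsKraft at hk'
  rw [hdx, pow_zero] at h1
  linarith [hk']

theorem half_pow_pred {m : ℕ} (hm : 1 ≤ m) : ((1:ℝ)/2)^(m-1) = 2 * ((1:ℝ)/2)^m := by
  obtain ⟨k, rfl⟩ := Nat.exists_eq_add_of_le hm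
  simp only [Nat.add_sub_cancel_left, pow_add, pow_one]
  ring

theorem kraft_merge {S : Finset α} {d : α → ℕ} (hk : IsKraft S d) (h2 : 2 ≤ S.card) :
    ∃ x ∈ S, ∃ y ∈ S, x ≠ y ∧ (∀ z ∈ S, d z ≤ d x) ∧ d y = d x ∧ 1 ≤ d x ∧
      IsKraft (S.erase y) (Function.update d x (d x - 1)) := by
  have hSne : S.Nonempty := Finset.card_pos.1 (by omega)
  have himg : (S.image d).Nonempty := hSne.image d
  set m := (S.image d).max' himg with hm
  have hmax : ∀ z ∈ S, d z ≤ m := fun z hz =>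
    Finset.le_max' _ _ (Finset.mem_image_of_mem d hz)
  obtain ⟨x0, hx0S, hx0⟩ := Finset.mem_image.1 ((S.image d).max'_mem himg)
  have hm1 : 1 ≤ m := by rw [hm, ← hx0]; exact kraft_one_le hk h2 hx0S
  -- natural-number Kraft identity
  have hnat : ∑ z ∈ S, 2^(m - d z) = 2^m := by
    have key : ((∑ z ∈ S, 2^(m - d z) : ℕ) : ℝ) = ((2^m : ℕ) : ℝ) := by
      push_cast
      have hterm : ∀ z ∈ S, (2:ℝ)^(m - d z) = 2^m * ((1:ℝ)/2)^(d z) := by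
        intro z hz
        have hle := hmax z hz
        rw [one_div, inv_pow, eq_comm, mul_inv_eq_iff_eq_mul₀ (by positivity), ← pow_add]
        congr 1
        omega
      rw [Finset.sum_congr rfl hterm, ← Finset.mul_sum, hk, mul_one]
    exact_mod_cast key
  set C := S.filter (fun z => d z = m) with hC
  have hsplit : C.card + ∑ z ∈ S.filter (fun z => ¬ d z = m), 2^(m - d z) = 2^m := by
    rw [← hnat, ← Finset.sum_filter_add_sum_filter_not S (fun z => d z = m)]
    congr 1
    rw [Finset.card_eq_sum_ones]
    refine Finset.sum_congr rfl fun z hz => ?_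
    rw [(Finset.mem_filter.1 hz).2]
    simp
  have hdvd1 : 2 ∣ ∑ z ∈ S.filter (fun z => ¬ d z = m), 2^(m - d z) := by
    refine Finset.dvd_sum fun z hz => ?_
    obtain ⟨hzS, hzm⟩ := Finset.mem_filter.1 hz
    have h3 : m - d z ≠ 0 := by have := hmax z hzS; omega
    exact dvd_pow_self 2 h3
  have hdvd2 : 2 ∣ 2^m := dvd_pow_self 2 (by omega)
  have heven : 2 ∣ C.card := by omega
  have hCx0 : x0 ∈ C := Finset.mem_filter.2 ⟨hx0S, hx0⟩
  have hCne : C.card ≠ 0 := Finset.card_ne_zero_of_mem hCx0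
  obtain ⟨x, hxC, y, hyC, hxy⟩ := Finset.one_lt_card.1 (show 1 < C.card by omega)
  obtain ⟨hxS, hdx⟩ := Finset.mem_filter.1 hxC
  obtain ⟨hyS, hdy⟩ := Finset.mem_filter.1 hyC
  refine ⟨x, hxS, y, hyS, hxy, by rw [hdx]; exact hmax, by rw [hdx, hdy],
    by rw [hdx]; exact hm1, ?_⟩
  -- the merged profile is Kraft
  have hxy' : x ∈ S.erase y := Finset.mem_erase.2 ⟨hxy, hxS⟩
  unfold IsKraft
  have e1 := Finset.add_sum_erase (S.erase y)
    (fun z => ((1:ℝ)/2)^(Function.update d x (d x - 1) z)) hxy'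
  have hrest : ∑ z ∈ (S.erase y).erase x, ((1:ℝ)/2) ^ (Function.update d x (d x - 1) z)
      = ∑ z ∈ (S.erase y).erase x, ((1:ℝ)/2) ^ (d z) := by
    refine Finset.sum_congr rfl fun z hz => ?_
    rw [Function.update_of_ne (Finset.mem_erase.1 hz).1]
  have e2 := Finset.add_sum_erase (S.erase y) (fun z => ((1:ℝ)/2)^(d z)) hxy'
  have e3 := Finset.add_sum_erase S (fun z => ((1:ℝ)/2)^(d z)) hyS
  rw [hrest] at e1
  rw [← e1]
  have hupd : Function.update d x (d x - 1) x = d x - 1 := Function.update_self x _ d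
  rw [hupd, hdx, hdy] at *
  have hk' := hk
  unfold IsKraft at hk'
  rw [half_pow_pred hm1]
  linarith [hk', e2, e3]

theorem kraft_singleton {x : α} {d : α → ℕ} (hk : IsKraft {x} d) : d x = 0 := by
  unfold IsKraft at hk
  rw [Finset.sum_singleton] at hk
  by_contra h
  have : ((1:ℝ)/2)^(d x) ≤ ((1:ℝ)/2)^1 :=
    pow_le_pow_of_le_one (by norm_num) (by norm_num) (by omega)
  rw [hk] at this
  norm_num at this

theorem kraft_le {S : Finset α} {d : α → ℕ} (hk : IsKraft S d) :
    ∀ x ∈ S, d x ≤ S.card - 1 := by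
  suffices H : ∀ n (S : Finset α) (d : α → ℕ), IsKraft S d → S.card = n →
      ∀ x ∈ S, d x ≤ S.card - 1 from H S.card S d hk rfl
  intro n
  induction n using Nat.strong_induction_on with
  | _ n ih =>
  intro S d hk hn z hz
  subst hn
  rcases Nat.lt_or_ge S.card 2 with hlt | hge
  · have h1 : S.card = 1 := by
      have : S.Nonempty := ⟨z, hz⟩
      have := Finset.card_pos.2 this
      omega
    obtain ⟨a, ha⟩ := Finset.card_eq_one.1 h1
    subst ha
    have hza : z = a := Finset.mem_singleton.1 hz
    subst hza
    rw [kraft_singleton hk]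
    omega
  · obtain ⟨x, hxS, y, hyS, hxy, hmax, hdyx, hdx1, hk'⟩ := kraft_merge hk hge
    have hcard' : (S.erase y).card = S.card - 1 := by
      rw [Finset.card_erase_of_mem hyS]
    have ihS := ih (S.card-1) (by omega) (S.erase y) _ hk' (by omega)
    have hxS' : x ∈ S.erase y := Finset.mem_erase.2 ⟨hxy, hxS⟩
    have hc2 : 2 ≤ S.card := hge
    have hdx : d x ≤ S.card - 1 := by
      have := ihS x hxS'
      rw [Function.update_self, hcard'] at this
      omega
    rcases eq_or_ne z y with rfl | hzy
    · omega
    rcases eq_or_ne z x with rfl | hzx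
    · omega
    · have hzS' : z ∈ S.erase y := Finset.mem_erase.2 ⟨hzy, hz⟩
      have := ihS z hzS'
      rw [Function.update_of_ne hzx, hcard'] at this
      omega

theorem kraft_half {S : Finset α} {d : α → ℕ} (hk : IsKraft S d) (h2 : 2 ≤ S.card) :
    ∃ A ⊆ S, ∑ x ∈ A, ((1:ℝ)/2) ^ d x = 1/2 := by
  suffices H : ∀ n (S : Finset α) (d : α → ℕ), IsKraft S d → 2 ≤ S.card → S.card = n →
      ∃ A ⊆ S, ∑ x ∈ A, ((1:ℝ)/2) ^ d x = 1/2 from H S.card S d hk h2 rfl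
  clear hk h2 S d
  intro n
  induction n using Nat.strong_induction_on with
  | _ n ih =>
  intro S d hk h2 hn
  by_cases hone : ∃ x ∈ S, d x = 1
  · obtain ⟨x, hxS, hdx⟩ := hone
    exact ⟨{x}, Finset.singleton_subset_iff.2 hxS, by rw [Finset.sum_singleton, hdx]; norm_num⟩
  · push_neg at hone
    have hge2 : ∀ z ∈ S, 2 ≤ d z := by
      intro z hz
      have h1 := kraft_one_le hk h2 hz
      have := hone z hz
      omega
    have hcard4 : 4 ≤ S.card := by
      by_contra hc
      have hbound : ∀ z ∈ S, ((1:ℝ)/2)^(d z) ≤ ((1:ℝ)/2)^2 := fun z hz =>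
        pow_le_pow_of_le_one (by norm_num) (by norm_num) (hge2 z hz)
      have hsum : (1:ℝ) ≤ S.card * ((1:ℝ)/2)^2 := by
        calc (1:ℝ) = ∑ x ∈ S, ((1:ℝ)/2)^(d x) := hk.symm
        _ ≤ ∑ _x ∈ S, ((1:ℝ)/2)^2 := Finset.sum_le_sum hbound
        _ = S.card * ((1:ℝ)/2)^2 := by rw [Finset.sum_const, nsmul_eq_mul]
      have : (S.card : ℝ) < 4 := by exact_mod_cast (by omega : S.card < 4)
      nlinarith
    obtain ⟨x, hxS, y, hyS, hxy, hmax, hdyx, hdx1, hk'⟩ := kraft_merge hk h2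
    have hcard' : (S.erase y).card = n - 1 := by
      rw [Finset.card_erase_of_mem hyS, hn]
    obtain ⟨A', hA'sub, hA'sum⟩ := ih (n-1) (by omega) (S.erase y) _ hk'
      (by rw [hcard']; omega) hcard'
    have hxny : x ∈ S.erase y := Finset.mem_erase.2 ⟨hxy, hxS⟩
    by_cases hxA : x ∈ A'
    · refine ⟨insert y A', ?_, ?_⟩
      · intro z hz
        rcases Finset.mem_insert.1 hz with rfl | hz'
        · exact hyS
        · exact Finset.erase_subset _ _ (hA'sub hz')
      · have hyA' : y ∉ A' := fun h => (Finset.mem_erase.1 (hA'sub h)).1 rfl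
        rw [Finset.sum_insert hyA']
        -- relate ∑_{A'} (1/2)^d to ∑_{A'} (1/2)^d'
        have e1 := Finset.add_sum_erase A' (fun z => ((1:ℝ)/2)^(d z)) hxA
        have e2 := Finset.add_sum_erase A'
          (fun z => ((1:ℝ)/2)^(Function.update d x (d x - 1) z)) hxA
        have hrest : ∑ z ∈ A'.erase x, ((1:ℝ)/2) ^ (Function.update d x (d x - 1) z)
            = ∑ z ∈ A'.erase x, ((1:ℝ)/2) ^ (d z) := by
          refine Finset.sum_congr rfl fun z hz => ?_
          rw [Function.update_of_ne (Finset.mem_erase.1 hz).1]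
        rw [hrest, Function.update_self] at e2
        rw [half_pow_pred hdx1] at e2
        rw [hdyx]
        linarith [hA'sum, e1, e2]
    · refine ⟨A', fun z hz => Finset.erase_subset _ _ (hA'sub hz), ?_⟩
      have heq : ∑ z ∈ A', ((1:ℝ)/2)^(d z)
          = ∑ z ∈ A', ((1:ℝ)/2)^(Function.update d x (d x - 1) z) := by
        refine Finset.sum_congr rfl fun z hz => ?_
        rw [Function.update_of_ne (ne_of_mem_of_not_mem hz hxA)]
      rw [heq, hA'sum]

theorem exists_kraft (S : Finset α) (hS : S.Nonempty) : ∃ d : α → ℕ, IsKraft S d := by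
  suffices H : ∀ n (S : Finset α), S.Nonempty → S.card = n → ∃ d : α → ℕ, IsKraft S d from
    H S.card S hS rfl
  clear hS S
  intro n
  induction n using Nat.strong_induction_on with
  | _ n ih =>
  intro S hS hn
  rcases Nat.lt_or_ge n 2 with hlt | hge
  · obtain ⟨a, ha⟩ := Finset.card_eq_one.1
      (show S.card = 1 by have := Finset.card_pos.2 hS; omega)
    subst ha
    exact ⟨fun _ => 0, by simp [IsKraft]⟩
  · obtain ⟨x, hx⟩ := hS
    have hne : (S.erase x).Nonempty := by
      rw [← Finset.card_pos, Finset.card_erase_of_mem hx]; omega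
    obtain ⟨d', hd'⟩ := ih (n-1) (by omega) (S.erase x) hne
      (by rw [Finset.card_erase_of_mem hx, hn])
    refine ⟨fun z => if z = x then 1 else d' z + 1, ?_⟩
    unfold IsKraft
    have e1 := Finset.add_sum_erase S
      (fun z => ((1:ℝ)/2)^(if z = x then 1 else d' z + 1)) hx
    simp only [if_pos rfl] at e1
    rw [← e1]
    have : ∑ z ∈ S.erase x, ((1:ℝ)/2)^(if z = x then 1 else d' z + 1)
        = ∑ z ∈ S.erase x, (1/2) * ((1:ℝ)/2)^(d' z) := by
      refine Finset.sum_congr rfl fun z hz => ?_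
      rw [if_neg (Finset.mem_erase.1 hz).1, pow_succ]
      ring
    rw [this, ← Finset.mul_sum, hd']
    norm_num

theorem isKraft_shift {A : Finset α} {d : α → ℕ} (hd : ∀ x ∈ A, 1 ≤ d x)
    (h : ∑ x ∈ A, ((1:ℝ)/2)^(d x) = 1/2) : IsKraft A (fun x => d x - 1) := by
  unfold IsKraft
  have hc : ∀ x ∈ A, ((1:ℝ)/2)^(d x - 1) = 2 * ((1:ℝ)/2)^(d x) := fun x hx =>
    half_pow_pred (hd x hx)
  rw [Finset.sum_congr rfl hc, ← Finset.mul_sum, h]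
  norm_num

theorem tree_of_kraft {S : Finset α} {d : α → ℕ} (hk : IsKraft S d) (hS : S.Nonempty) :
    ∃ T : DTree α, T.leaves.toFinset = S ∧ T.leaves.Nodup ∧
      ∀ x ∈ S, T.find? x = some (d x) := by
  suffices H : ∀ n (S : Finset α) (d : α → ℕ), IsKraft S d → S.Nonempty → S.card = n →
      ∃ T : DTree α, T.leaves.toFinset = S ∧ T.leaves.Nodup ∧
        ∀ x ∈ S, T.find? x = some (d x) from H S.card S d hk hS rfl
  clear hk hS S d
  intro n
  induction n using Nat.strong_induction_on with
  | _ n ih =>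
  intro S d hk hS hn
  subst hn
  rcases Nat.lt_or_ge S.card 2 with hlt | hge
  · obtain ⟨a, ha⟩ := Finset.card_eq_one.1
      (show S.card = 1 by have := Finset.card_pos.2 hS; omega)
    subst ha
    have h0 : d a = 0 := kraft_singleton hk
    refine ⟨DTree.leaf a, by simp [DTree.leaves], by simp [DTree.leaves], ?_⟩
    intro x hx
    rw [Finset.mem_singleton] at hx
    subst hx
    simp [DTree.find?, h0]
  · obtain ⟨A, hAsub, hAsum⟩ := kraft_half hk hge
    have hd1 : ∀ x ∈ S, 1 ≤ d x := fun x hx => kraft_one_le hk hge hx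
    have hAne : A.Nonempty := by
      rcases Finset.eq_empty_or_nonempty A with rfl | h
      · rw [Finset.sum_empty] at hAsum; norm_num at hAsum
      · exact h
    have hBsum : ∑ x ∈ S \ A, ((1:ℝ)/2)^(d x) = 1/2 := by
      have hsd := Finset.sum_sdiff (f := fun x => ((1:ℝ)/2)^(d x)) hAsub
      have hkk := hk
      unfold IsKraft at hkk
      rw [hAsum] at hsd
      linarith
    have hBne : (S \ A).Nonempty := by
      rcases Finset.eq_empty_or_nonempty (S \ A) with h | h
      · rw [h, Finset.sum_empty] at hBsum; norm_num at hBsum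
      · exact h
    have hkA : IsKraft A (fun x => d x - 1) :=
      isKraft_shift (fun x hx => hd1 x (hAsub hx)) hAsum
    have hkB : IsKraft (S \ A) (fun x => d x - 1) :=
      isKraft_shift (fun x hx => hd1 x (Finset.mem_sdiff.1 hx).1) hBsum
    obtain ⟨b, hb⟩ := hBne
    obtain ⟨hbS, hbA⟩ := Finset.mem_sdiff.1 hb
    have hAcard : A.card < S.card :=
      Finset.card_lt_card ((Finset.ssubset_iff_of_subset hAsub).2 ⟨b, hbS, hbA⟩)
    obtain ⟨a0, ha0⟩ := hAne
    have hBcard : (S \ A).card < S.card :=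
      Finset.card_lt_card ((Finset.ssubset_iff_of_subset (Finset.sdiff_subset)).2
        ⟨a0, hAsub ha0, fun h => (Finset.mem_sdiff.1 h).2 ha0⟩)
    obtain ⟨T₁, hT1l, hT1n, hT1f⟩ := ih A.card hAcard A _ hkA ⟨a0, ha0⟩ rfl
    obtain ⟨T₂, hT2l, hT2n, hT2f⟩ := ih (S \ A).card hBcard (S \ A) _ hkB ⟨b, hb⟩ rfl
    refine ⟨DTree.node A T₁ T₂, ?_, ?_, ?_⟩
    · show (T₁.leaves ++ T₂.leaves).toFinset = S
      rw [List.toFinset_append, hT1l, hT2l]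
      exact Finset.union_sdiff_of_subset hAsub
    · show (T₁.leaves ++ T₂.leaves).Nodup
      rw [List.nodup_append]
      refine ⟨hT1n, hT2n, fun a ha1 b ha2 hab => ?_⟩
      subst hab
      have h1 : a ∈ A := hT1l ▸ List.mem_toFinset.2 ha1
      have h2 : a ∈ S \ A := hT2l ▸ List.mem_toFinset.2 ha2
      exact (Finset.mem_sdiff.1 h2).2 h1
    · intro x hx
      by_cases hxA : x ∈ A
      · have hstep : (DTree.node A T₁ T₂).find? x = (T₁.find? x).map (· + 1) := by
          simp [DTree.find?, hxA]
        rw [hstep, hT1f x hxA]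
        simp only [Option.map_some]
        congr 1
        have := hd1 x hx
        omega
      · have hxB : x ∈ S \ A := Finset.mem_sdiff.2 ⟨hx, hxA⟩
        have hstep : (DTree.node A T₁ T₂).find? x = (T₂.find? x).map (· + 1) := by
          simp [DTree.find?, hxA]
        rw [hstep, hT2f x hxB]
        simp only [Option.map_some]
        congr 1
        have := hd1 x hx
        omega

end TQ

namespace TQ
variable {α : Type} [Fintype α] [DecidableEq α]

open scoped Classical in
/-- The support of `μ` as a finset. -/
noncomputable def supp (μ : α → ℝ) : Finset α :=
  Finset.univ.filter (fun x => μ x ≠ 0)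

theorem mem_supp {μ : α → ℝ} {x : α} : x ∈ supp μ ↔ μ x ≠ 0 := by
  simp [supp]

theorem supp_nonempty {μ : α → ℝ} (hμ : IsDistribution μ) : (supp μ).Nonempty := by
  by_contra h
  rw [Finset.not_nonempty_iff_eq_empty] at h
  have : ∑ x, μ x = 0 := by
    refine Finset.sum_eq_zero fun x _ => ?_
    by_contra hx
    exact absurd (mem_supp.2 hx) (by rw [h]; exact Finset.notMem_empty x)
  rw [hμ.2] at this
  norm_num at this

theorem good_of_valid {T : DTree α} {μ : α → ℝ} (h : IsValid T μ) : DTree.Good T :=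
  ⟨h.nodup, fun x hx => ⟨T.depth x, h.finds x ((h.mem_leaves x).1 hx)⟩⟩

theorem leaves_toFinset_of_valid {T : DTree α} {μ : α → ℝ} (h : IsValid T μ) :
    T.leaves.toFinset = supp μ := by
  ext x
  rw [List.mem_toFinset, mem_supp, h.mem_leaves]

theorem isKraft_depth_of_valid {T : DTree α} {μ : α → ℝ} (h : IsValid T μ) :
    IsKraft (supp μ) T.depth := by
  have := DTree.kraft T (good_of_valid h)
  rwa [leaves_toFinset_of_valid h] at this

theorem cost_eq_sum_supp {T : DTree α} {μ : α → ℝ} :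
    cost T μ = ∑ x ∈ supp μ, μ x * (T.depth x : ℝ) := by
  unfold cost
  rw [eq_comm]
  refine Finset.sum_subset (Finset.subset_univ _) fun x _ hx => ?_
  have : μ x = 0 := by
    by_contra h
    exact hx (mem_supp.2 h)
  rw [this, zero_mul]

theorem cost_nonneg {T : DTree α} {μ : α → ℝ} (hμ : ∀ x, 0 ≤ μ x) : 0 ≤ cost T μ :=
  Finset.sum_nonneg fun x _ => mul_nonneg (hμ x) (Nat.cast_nonneg _)

theorem optCost_bddBelow {μ : α → ℝ} (hμ : ∀ x, 0 ≤ μ x) :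
    BddBelow { c | ∃ T : DTree α, IsValid T μ ∧ c = cost T μ } := by
  refine ⟨0, fun c hc => ?_⟩
  obtain ⟨T, -, rfl⟩ := hc
  exact cost_nonneg hμ

theorem optCost_le_cost {T : DTree α} {μ : α → ℝ} (hμ : ∀ x, 0 ≤ μ x) (h : IsValid T μ) :
    OptCost μ ≤ cost T μ :=
  csInf_le (optCost_bddBelow hμ) ⟨T, h, rfl⟩

/-- From a Kraft profile on the support, get a valid tree with those depths. -/
theorem valid_of_profile {μ : α → ℝ} (hμ : IsDistribution μ) {d : α → ℕ}
    (hk : IsKraft (supp μ) d) :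
    ∃ T : DTree α, IsValid T μ ∧ (∀ x ∈ supp μ, T.depth x = d x) ∧
      cost T μ = ∑ x ∈ supp μ, μ x * (d x : ℝ) := by
  obtain ⟨T, hl, hn, hf⟩ := tree_of_kraft hk (supp_nonempty hμ)
  have hdep : ∀ x ∈ supp μ, T.depth x = d x := by
    intro x hx
    unfold DTree.depth
    rw [hf x hx]
    rfl
  have hml : ∀ x, x ∈ T.leaves ↔ μ x ≠ 0 := by
    intro x
    rw [← mem_supp, ← hl, List.mem_toFinset]
  refine ⟨T, ⟨hn, hml, fun x hx => ?_⟩, hdep, ?_⟩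
  · rw [hf x (mem_supp.2 hx), hdep x (mem_supp.2 hx)]
  · rw [cost_eq_sum_supp]
    exact Finset.sum_congr rfl fun x hx => by rw [hdep x hx]

/-- `OptCost` is attained by an optimal Kraft profile on the support. -/
theorem exists_opt_profile {μ : α → ℝ} (hμ : IsDistribution μ) :
    ∃ d : α → ℕ, IsKraft (supp μ) d ∧ OptCost μ = ∑ x ∈ supp μ, μ x * (d x : ℝ) ∧
      ∀ d' : α → ℕ, IsKraft (supp μ) d' →
        OptCost μ ≤ ∑ x ∈ supp μ, μ x * (d' x : ℝ) := by
  classical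
  set N := Fintype.card α with hN
  set G : Finset (α → Fin (N + 1)) :=
    Finset.univ.filter (fun g => IsKraft (supp μ) (fun x => (g x : ℕ))) with hG
  set PC : Finset ℝ := G.image (fun g => ∑ x ∈ supp μ, μ x * ((g x : ℕ) : ℝ)) with hPC
  -- every Kraft profile has its cost in PC
  have hmem : ∀ d : α → ℕ, IsKraft (supp μ) d →
      (∑ x ∈ supp μ, μ x * (d x : ℝ)) ∈ PC := by
    intro d hd
    have hbd : ∀ x, (if x ∈ supp μ then d x else 0) < N + 1 := by
      intro x
      by_cases hx : x ∈ supp μ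
      · rw [if_pos hx]
        have h1 := kraft_le hd x hx
        have h2 : (supp μ).card ≤ N := Finset.card_le_univ _
        omega
      · rw [if_neg hx]; omega
    set g : α → Fin (N + 1) := fun x => ⟨if x ∈ supp μ then d x else 0, hbd x⟩ with hg
    have hgk : IsKraft (supp μ) (fun x => (g x : ℕ)) := by
      unfold IsKraft
      refine Eq.trans (Finset.sum_congr rfl fun x hx => ?_) hd
      congr 1
      simp [hg, if_pos hx]
    refine Finset.mem_image.2 ⟨g, Finset.mem_filter.2 ⟨Finset.mem_univ _, hgk⟩, ?_⟩
    refine Finset.sum_congr rfl fun x hx => ?_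
    simp [hg, if_pos hx]
  have hPCne : PC.Nonempty := by
    obtain ⟨d, hd⟩ := exists_kraft (supp μ) (supp_nonempty hμ)
    exact ⟨_, hmem d hd⟩
  -- OptCost equals the min of PC
  have hval : ∀ c ∈ PC, ∃ d : α → ℕ, IsKraft (supp μ) d ∧
      c = ∑ x ∈ supp μ, μ x * (d x : ℝ) := by
    intro c hc
    obtain ⟨g, hg, rfl⟩ := Finset.mem_image.1 hc
    exact ⟨fun x => (g x : ℕ), (Finset.mem_filter.1 hg).2, rfl⟩
  obtain ⟨dm, hdm, hdmc⟩ := hval (PC.min' hPCne) (PC.min'_mem hPCne)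
  have hopt : OptCost μ = PC.min' hPCne := by
    refine le_antisymm ?_ ?_
    · obtain ⟨T, hT, -, hTc⟩ := valid_of_profile hμ hdm
      have := optCost_le_cost hμ.1 hT
      rw [hTc, ← hdmc] at this
      exact this
    · refine le_csInf ?_ ?_
      · obtain ⟨T, hT, -, -⟩ := valid_of_profile hμ hdm
        exact ⟨cost T μ, T, hT, rfl⟩
      · rintro c ⟨T, hT, rfl⟩
        rw [cost_eq_sum_supp]
        exact PC.min'_le _ (hmem T.depth (isKraft_depth_of_valid hT))
  refine ⟨dm, hdm, by rw [hopt, hdmc], fun d' hd' => ?_⟩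
  rw [hopt]
  exact PC.min'_le _ (hmem d' hd')

end TQ

namespace TQ
variable {α : Type} [Fintype α] [DecidableEq α]

theorem sum_supp_eq_one {μ : α → ℝ} (hμ : IsDistribution μ) :
    ∑ x ∈ supp μ, μ x = 1 := by
  rw [← hμ.2]
  refine Finset.sum_subset (Finset.subset_univ (supp μ)) fun x _ hx => ?_
  by_contra h
  exact hx (mem_supp.2 h)

theorem half_pow_inj {a b : ℕ} (h : ((1:ℝ)/2)^a = ((1:ℝ)/2)^b) : a = b := by
  by_contra hne
  rcases Nat.lt_or_ge a b with hlt | hge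
  · have := pow_lt_pow_right_of_lt_one₀ (by norm_num : (0:ℝ) < 1/2) (by norm_num) hlt
    rw [h] at this
    exact lt_irrefl _ this
  · have hlt : b < a := by omega
    have := pow_lt_pow_right_of_lt_one₀ (by norm_num : (0:ℝ) < 1/2) (by norm_num) hlt
    rw [h] at this
    exact lt_irrefl _ this

theorem dyadic_exponent {μ : α → ℝ} (hμ : IsDistribution μ) (hd : IsDyadic μ)
    (h2 : 2 ≤ (supp μ).card) :
    ∃ e : α → ℕ, IsKraft (supp μ) e ∧ ∀ x ∈ supp μ, μ x = ((1:ℝ)/2)^(e x) := by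
  have H : ∀ x ∈ supp μ, ∃ k : ℕ, μ x = ((1:ℝ)/2)^k := by
    intro x hx
    have hx0 : μ x ≠ 0 := mem_supp.1 hx
    have hxpos : 0 < μ x := lt_of_le_of_ne (hμ.1 x) (Ne.symm hx0)
    obtain ⟨y, hy, hyx⟩ := Finset.exists_mem_ne (show 1 < (supp μ).card by omega) x
    have hypos : 0 < μ y := lt_of_le_of_ne (hμ.1 y) (Ne.symm (mem_supp.1 hy))
    have hxy1 : μ x + μ y ≤ 1 := by
      rw [← hμ.2]
      have : ∑ z ∈ ({x, y} : Finset α), μ z ≤ ∑ z, μ z :=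
        Finset.sum_le_sum_of_subset_of_nonneg (Finset.subset_univ _)
          (fun z _ _ => hμ.1 z)
      rwa [Finset.sum_pair (Ne.symm hyx)] at this
    have hlt1 : μ x < 1 := by linarith
    rcases hd x with h0 | ⟨k, hk⟩
    · exact absurd h0 hx0
    have hk0 : 0 < k := by
      by_contra hk0
      push_neg at hk0
      have : (1:ℝ) ≤ ((1:ℝ)/2)^k := by
        rw [show ((1:ℝ)/2) = (2:ℝ)⁻¹ by norm_num, inv_zpow, ← zpow_neg]
        exact one_le_zpow₀ (by norm_num) (by omega)
      rw [← hk] at this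
      linarith
    refine ⟨k.toNat, ?_⟩
    rw [hk, ← zpow_natCast ((1:ℝ)/2) k.toNat]
    congr 1
    omega
  choose! e he using H
  refine ⟨e, ?_, he⟩
  unfold IsKraft
  refine Eq.trans ?_ (sum_supp_eq_one hμ)
  exact Finset.sum_congr rfl fun x hx => (he x hx).symm

/-- Gibbs' inequality with equality analysis, for dyadic `μ`. -/
theorem gibbs {μ : α → ℝ} (hμ : IsDistribution μ) {e d : α → ℕ}
    (he : ∀ x ∈ supp μ, μ x = ((1:ℝ)/2)^(e x)) (hd : IsKraft (supp μ) d) :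
    (∑ x ∈ supp μ, μ x * (e x : ℝ)) ≤ (∑ x ∈ supp μ, μ x * (d x : ℝ)) ∧
    ((∑ x ∈ supp μ, μ x * (d x : ℝ)) ≤ (∑ x ∈ supp μ, μ x * (e x : ℝ)) →
      ∀ x ∈ supp μ, d x = e x) := by
  have hpos : ∀ x ∈ supp μ, 0 < μ x := fun x hx =>
    lt_of_le_of_ne (hμ.1 x) (Ne.symm (mem_supp.1 hx))
  set t : α → ℝ := fun x => ((1:ℝ)/2)^(d x) / μ x with ht
  have htpos : ∀ x ∈ supp μ, 0 < t x := fun x hx =>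
    div_pos (half_pow_pos _) (hpos x hx)
  have hlog : ∀ x ∈ supp μ, Real.log (t x) = (((e x : ℝ)) - (d x : ℝ)) * Real.log 2 := by
    intro x hx
    show Real.log (((1:ℝ)/2)^(d x) / μ x) = _
    rw [he x hx, ← zpow_natCast ((1:ℝ)/2) (d x), ← zpow_natCast ((1:ℝ)/2) (e x),
      ← zpow_sub₀ (by norm_num : ((1:ℝ)/2) ≠ 0), Real.log_zpow,
      show ((1:ℝ)/2) = (2:ℝ)⁻¹ by norm_num, Real.log_inv]
    push_cast
    ring
  have hμt : ∀ x ∈ supp μ, μ x * t x = ((1:ℝ)/2)^(d x) := by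
    intro x hx
    show μ x * (((1:ℝ)/2)^(d x) / μ x) = _
    rw [mul_comm, div_mul_cancel₀ _ (mem_supp.1 hx)]
  have key : ∀ x ∈ supp μ, μ x * (((e x:ℝ) - (d x:ℝ)) * Real.log 2)
      ≤ ((1:ℝ)/2)^(d x) - μ x := by
    intro x hx
    have h1 : Real.log (t x) ≤ t x - 1 := Real.log_le_sub_one_of_pos (htpos x hx)
    have h2 : μ x * Real.log (t x) ≤ μ x * (t x - 1) :=
      mul_le_mul_of_nonneg_left h1 (hμ.1 x)
    rw [hlog x hx, mul_sub, mul_one, hμt x hx] at h2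
    exact h2
  have hsum_eq : ∑ x ∈ supp μ, μ x * (((e x:ℝ) - (d x:ℝ)) * Real.log 2)
      = ((∑ x ∈ supp μ, μ x * (e x:ℝ)) - ∑ x ∈ supp μ, μ x * (d x:ℝ)) * Real.log 2 := by
    rw [sub_mul, Finset.sum_mul, Finset.sum_mul, ← Finset.sum_sub_distrib]
    exact Finset.sum_congr rfl fun x _ => by ring
  have hrhs : ∑ x ∈ supp μ, (((1:ℝ)/2)^(d x) - μ x) = 0 := by
    rw [Finset.sum_sub_distrib, hd, sum_supp_eq_one hμ]
    ring
  have hlog2 : 0 < Real.log 2 := Real.log_pos one_lt_two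
  constructor
  · have h4 : ∑ x ∈ supp μ, μ x * (((e x:ℝ) - (d x:ℝ)) * Real.log 2) ≤ 0 := by
      rw [← hrhs]
      exact Finset.sum_le_sum key
    rw [hsum_eq] at h4
    nlinarith
  · intro hle x₀ hx₀
    by_contra hne
    have hstrict : μ x₀ * (((e x₀:ℝ) - (d x₀:ℝ)) * Real.log 2)
        < ((1:ℝ)/2)^(d x₀) - μ x₀ := by
      have ht1 : t x₀ ≠ 1 := by
        intro h1
        have : ((1:ℝ)/2)^(d x₀) = μ x₀ := by
          have := hμt x₀ hx₀
          rw [h1, mul_one] at this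
          exact this.symm
        rw [he x₀ hx₀] at this
        exact hne (half_pow_inj this)
      have h1 : Real.log (t x₀) < t x₀ - 1 :=
        Real.log_lt_sub_one_of_pos (htpos x₀ hx₀) ht1
      have h2 : μ x₀ * Real.log (t x₀) < μ x₀ * (t x₀ - 1) :=
        mul_lt_mul_of_pos_left h1 (hpos x₀ hx₀)
      rw [hlog x₀ hx₀, mul_sub, mul_one, hμt x₀ hx₀] at h2
      exact h2
    have h5 : ∑ x ∈ supp μ, μ x * (((e x:ℝ) - (d x:ℝ)) * Real.log 2)
        < ∑ x ∈ supp μ, (((1:ℝ)/2)^(d x) - μ x) :=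
      Finset.sum_lt_sum key ⟨x₀, hx₀, hstrict⟩
    rw [hrhs, hsum_eq] at h5
    nlinarith

end TQ

namespace TQ

theorem nonconstant_card {α : Type} [Fintype α] [DecidableEq α] {μ : α → ℝ}
    (h : NonConstant μ) : 2 ≤ (supp μ).card := by
  obtain ⟨x, y, hxy, hx, hy⟩ := h
  exact Finset.one_lt_card.2 ⟨x, mem_supp.2 hx, y, mem_supp.2 hy, hxy⟩

theorem mem_splitters {n : ℕ} {μ : Fin n → ℝ} {A : Finset (Fin n)} :
    A ∈ splitters n μ ↔ ∑ x ∈ A, μ x = 1 / 2 := by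
  simp [splitters]

/-- Any tree achieving the optimum for a non-constant dyadic distribution
has a splitter among its questions (namely, its root question). -/
theorem question_splitter {n : ℕ} {μ : Fin n → ℝ} (hμ : IsDistribution μ) (hdy : IsDyadic μ)
    (hnc : NonConstant μ) {T : DTree (Fin n)} (hT : IsValid T μ) (hc : cost T μ ≤ OptCost μ) :
    ∃ q ∈ T.questions, q ∈ splitters n μ := by
  have h2 : 2 ≤ (supp μ).card := nonconstant_card hnc
  obtain ⟨e, heK, he⟩ := dyadic_exponent hμ hdy h2
  have hdT : IsKraft (supp μ) T.depth := isKraft_depth_of_valid hT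
  have hgb := gibbs hμ he hdT
  obtain ⟨dm, hdmK, hdmc, hopt⟩ := exists_opt_profile hμ
  have hoe : OptCost μ ≤ ∑ x ∈ supp μ, μ x * (e x : ℝ) := hopt e heK
  have hcs : cost T μ = ∑ x ∈ supp μ, μ x * (T.depth x : ℝ) := cost_eq_sum_supp
  have hdepth_eq : ∀ x ∈ supp μ, T.depth x = e x := hgb.2 (by rw [← hcs]; linarith)
  cases T with
  | leaf z =>
    exfalso
    have hlf : (DTree.leaf z).leaves.toFinset = supp μ := leaves_toFinset_of_valid hT
    have hcard : (supp μ).card = 1 := by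
      rw [← hlf]
      simp [DTree.leaves]
    omega
  | node q t f =>
    refine ⟨q, Set.mem_insert q _, mem_splitters.2 ?_⟩
    have hGood : DTree.Good (DTree.node q t f) := good_of_valid hT
    obtain ⟨hgt, hgf, hyes, hno⟩ := DTree.good_node hGood
    have hL1supp : ∀ x ∈ t.leaves, x ∈ supp μ := by
      intro x hx
      exact mem_supp.2 ((hT.mem_leaves x).1 (by simp [DTree.leaves, hx]))
    have hstep1 : ∑ x ∈ q, μ x = ∑ x ∈ t.leaves.toFinset, μ x := by
      rw [eq_comm]
      refine Finset.sum_subset (fun x hx => hyes x (List.mem_toFinset.1 hx)) ?_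
      intro x hxq hxL
      by_contra hμx
      have hxT : x ∈ (DTree.node q t f).leaves := (hT.mem_leaves x).2 hμx
      simp only [DTree.leaves, List.mem_append] at hxT
      rcases hxT with h | h
      · exact hxL (List.mem_toFinset.2 h)
      · exact hno x h hxq
    rw [hstep1]
    have hstep2 : ∀ x ∈ t.leaves.toFinset, μ x = ((1:ℝ)/2) ^ (t.depth x + 1) := by
      intro x hx
      have hxl := List.mem_toFinset.1 hx
      have hxs := hL1supp x hxl
      rw [he x hxs, ← hdepth_eq x hxs, DTree.depth_node_yes hGood hxl]
    rw [Finset.sum_congr rfl hstep2]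
    have : ∑ x ∈ t.leaves.toFinset, ((1:ℝ)/2) ^ (t.depth x + 1)
        = (1/2) * ∑ x ∈ t.leaves.toFinset, ((1:ℝ)/2) ^ (t.depth x) := by
      rw [Finset.mul_sum]
      exact Finset.sum_congr rfl fun x _ => by rw [pow_succ]; ring
    rw [this, DTree.kraft t hgt]
    norm_num

end TQ

namespace TQ

theorem find?_eq_depth {α : Type} [DecidableEq α] {T : DTree α} {x : α} {k : ℕ}
    (h : T.find? x = some k) : T.find? x = some (T.depth x) := by
  rw [DTree.depth, h]
  rfl

variable {α : Type} [Fintype α] [DecidableEq α]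

/-- Conditional distribution on a nonempty subset of the support. -/
theorem conditional_piece {μ : α → ℝ} (hμ : IsDistribution μ)
    (S₁ : Finset α) (hsub : S₁ ⊆ supp μ) (hne : S₁.Nonempty) :
    ∃ (μ₁ : α → ℝ) (w : ℝ), 0 < w ∧ IsDistribution μ₁ ∧ supp μ₁ = S₁ ∧
      (∀ x ∈ S₁, μ x = w * μ₁ x) ∧ w = ∑ x ∈ S₁, μ x := by
  classical
  set w := ∑ x ∈ S₁, μ x with hwdef
  have hw : 0 < w := Finset.sum_pos
    (fun x hx => lt_of_le_of_ne (hμ.1 x) (Ne.symm (mem_supp.1 (hsub hx)))) hne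
  refine ⟨fun x => if x ∈ S₁ then μ x / w else 0, w, hw, ⟨?_, ?_⟩, ?_, ?_, rfl⟩
  · intro x
    show (0:ℝ) ≤ if x ∈ S₁ then μ x / w else 0
    by_cases hx : x ∈ S₁
    · rw [if_pos hx]; exact div_nonneg (hμ.1 x) hw.le
    · rw [if_neg hx]
  · rw [Finset.sum_ite_mem, Finset.univ_inter, ← Finset.sum_div, ← hwdef,
      div_self hw.ne']
  · ext x
    rw [mem_supp]
    by_cases hx : x ∈ S₁
    · simp only [if_pos hx, hx, iff_true]
      exact div_ne_zero (mem_supp.1 (hsub hx)) hw.ne'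
    · simp only [if_neg hx, hx, iff_false]
      simp
  · intro x hx
    show μ x = w * (if x ∈ S₁ then μ x / w else 0)
    rw [if_pos hx, mul_div_cancel₀ _ hw.ne']

theorem hitter_opt {n : ℕ} {Q : Finset (Finset (Fin n))}
    (hQ : ∀ ν : Fin n → ℝ, IsDistribution ν → IsDyadic ν → NonConstant ν →
      ∃ A ∈ Q, A ∈ splitters n ν) :
    ∀ (μ : Fin n → ℝ), IsDistribution μ →
      ∃ T : DTree (Fin n), IsValid T μ ∧ UsesQuestions T ↑Q ∧ cost T μ = OptCost μ := by
  suffices H : ∀ s (μ : Fin n → ℝ), IsDistribution μ → (supp μ).card = s →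
      ∃ T : DTree (Fin n), IsValid T μ ∧ UsesQuestions T ↑Q ∧ cost T μ = OptCost μ from
    fun μ hμ => H _ μ hμ rfl
  intro s
  induction s using Nat.strong_induction_on with
  | _ s ih =>
  intro μ hμ hs
  rcases Nat.lt_or_ge (supp μ).card 2 with hlt | hge
  · -- base case: singleton support
    obtain ⟨a, ha⟩ := Finset.card_eq_one.1 (show (supp μ).card = 1 by
      have := Finset.card_pos.2 (supp_nonempty hμ); omega)
    have hma : μ a ≠ 0 := mem_supp.1 (ha ▸ Finset.mem_singleton_self a)
    have hml : ∀ x, x ∈ (DTree.leaf a : DTree (Fin n)).leaves ↔ μ x ≠ 0 := by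
      intro x
      simp only [DTree.leaves, List.mem_singleton]
      constructor
      · rintro rfl; exact hma
      · intro hx
        have hxs : x ∈ supp μ := mem_supp.2 hx
        rw [ha, Finset.mem_singleton] at hxs
        exact hxs
    have hvalid : IsValid (DTree.leaf a) μ := by
      refine ⟨List.nodup_singleton a, hml, fun x hx => ?_⟩
      have hxa : x = a := by
        have hxs := mem_supp.2 hx
        rw [ha, Finset.mem_singleton] at hxs
        exact hxs
      subst hxa
      simp [DTree.find?, DTree.depth]
    have hcost : cost (DTree.leaf a) μ = 0 := by
      rw [cost_eq_sum_supp, ha]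
      simp [DTree.depth, DTree.find?]
    refine ⟨DTree.leaf a, hvalid, ?_, ?_⟩
    · intro q hq
      exact absurd hq (by simp [DTree.questions])
    · refine le_antisymm ?_ (optCost_le_cost hμ.1 hvalid)
      rw [hcost]
      refine le_csInf ⟨cost (DTree.leaf a) μ, DTree.leaf a, hvalid, rfl⟩ ?_
      rintro c ⟨T', hT', rfl⟩
      exact cost_nonneg hμ.1
  · -- main case
    obtain ⟨dm, hdmK, hdmc, hdmin⟩ := exists_opt_profile hμ
    set S := supp μ with hSdef
    set ν : Fin n → ℝ := fun x => if x ∈ S then ((1:ℝ)/2)^(dm x) else 0 with hν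
    have hνdist : IsDistribution ν := by
      constructor
      · intro x
        by_cases hx : x ∈ S
        · simp only [hν, if_pos hx]; positivity
        · simp only [hν, if_neg hx]; exact le_refl 0
      · rw [hν]
        rw [Finset.sum_ite_mem, Finset.univ_inter]
        exact hdmK
    have hνdy : IsDyadic ν := by
      intro x
      by_cases hx : x ∈ S
      · exact Or.inr ⟨dm x, by simp only [hν, if_pos hx]; rw [zpow_natCast]⟩
      · exact Or.inl (by simp only [hν, if_neg hx])
    have hνnc : NonConstant ν := by
      obtain ⟨x, hxS, y, hyS, hxy⟩ := Finset.one_lt_card.1 hge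
      refine ⟨x, y, hxy, ?_, ?_⟩
      · simp only [hν, if_pos hxS]; positivity
      · simp only [hν, if_pos hyS]; positivity
    obtain ⟨A, hAQ, hAsp⟩ := hQ ν hνdist hνdy hνnc
    set S₁ := S ∩ A with hS₁def
    set S₂ := S \ A with hS₂def
    have hAsum : ∑ x ∈ S₁, ((1:ℝ)/2)^(dm x) = 1/2 := by
      have h1 := mem_splitters.1 hAsp
      have h2 : ∑ x ∈ A, ν x = ∑ x ∈ A ∩ S, ((1:ℝ)/2)^(dm x) := by
        rw [hν]
        exact Finset.sum_ite_mem A S _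
      rw [h2, Finset.inter_comm] at h1
      exact h1
    have htot := Finset.sum_inter_add_sum_sdiff S A (fun x => ((1:ℝ)/2)^(dm x))
    have hdmK' : ∑ x ∈ S, ((1:ℝ)/2)^(dm x) = 1 := hdmK
    have hBsum : ∑ x ∈ S₂, ((1:ℝ)/2)^(dm x) = 1/2 := by
      rw [hS₂def]
      have : ∑ x ∈ S ∩ A, ((1:ℝ)/2)^(dm x) = 1/2 := hAsum
      linarith [htot, hdmK']
    have hS₁ne : S₁.Nonempty := by
      rcases Finset.eq_empty_or_nonempty S₁ with h | h
      · rw [h, Finset.sum_empty] at hAsum; norm_num at hAsum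
      · exact h
    have hS₂ne : S₂.Nonempty := by
      rcases Finset.eq_empty_or_nonempty S₂ with h | h
      · rw [h, Finset.sum_empty] at hBsum; norm_num at hBsum
      · exact h
    have hd1 : ∀ x ∈ S, 1 ≤ dm x := fun x hx => kraft_one_le hdmK hge hx
    have hK1 : IsKraft S₁ (fun x => dm x - 1) :=
      isKraft_shift (fun x hx => hd1 x (Finset.mem_of_mem_inter_left hx)) hAsum
    have hK2 : IsKraft S₂ (fun x => dm x - 1) :=
      isKraft_shift (fun x hx => hd1 x (Finset.mem_sdiff.1 hx).1) hBsum
    obtain ⟨μ₁, w₁, hw₁, hμ₁, hsupp₁, hscale₁, hwdef₁⟩ :=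
      conditional_piece hμ S₁ Finset.inter_subset_left hS₁ne
    obtain ⟨μ₂, w₂, hw₂, hμ₂, hsupp₂, hscale₂, hwdef₂⟩ :=
      conditional_piece hμ S₂ Finset.sdiff_subset hS₂ne
    -- cardinalities decrease
    obtain ⟨b, hb⟩ := hS₂ne
    obtain ⟨a0, ha0⟩ := hS₁ne
    have hc1 : S₁.card < s := by
      have : S₁.card < S.card := Finset.card_lt_card
        ((Finset.ssubset_iff_of_subset Finset.inter_subset_left).2
          ⟨b, (Finset.mem_sdiff.1 hb).1,
            fun h => (Finset.mem_sdiff.1 hb).2 (Finset.mem_of_mem_inter_right h)⟩)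
      omega
    have hc2 : S₂.card < s := by
      have : S₂.card < S.card := Finset.card_lt_card
        ((Finset.ssubset_iff_of_subset Finset.sdiff_subset).2
          ⟨a0, Finset.mem_of_mem_inter_left ha0,
            fun h => (Finset.mem_sdiff.1 h).2 (Finset.mem_of_mem_inter_right ha0)⟩)
      omega
    obtain ⟨T₁, hT₁v, hT₁q, hT₁c⟩ := ih S₁.card hc1 μ₁ hμ₁ (by rw [hsupp₁])
    obtain ⟨T₂, hT₂v, hT₂q, hT₂c⟩ := ih S₂.card hc2 μ₂ hμ₂ (by rw [hsupp₂])
    have l₁ : T₁.leaves.toFinset = S₁ := by rw [leaves_toFinset_of_valid hT₁v, hsupp₁]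
    have l₂ : T₂.leaves.toFinset = S₂ := by rw [leaves_toFinset_of_valid hT₂v, hsupp₂]
    have hdisj12 : ∀ z, z ∈ S₁ → z ∈ S₂ → False := by
      intro z h1 h2
      exact (Finset.mem_sdiff.1 h2).2 (Finset.mem_of_mem_inter_right h1)
    have hunion : ∀ z, z ∈ S ↔ z ∈ S₁ ∨ z ∈ S₂ := by
      intro z
      by_cases hz : z ∈ A
      · simp [hS₁def, hS₂def, hz, Finset.mem_inter, Finset.mem_sdiff]
      · simp [hS₁def, hS₂def, hz, Finset.mem_inter, Finset.mem_sdiff]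
    set T : DTree (Fin n) := DTree.node A T₁ T₂ with hT
    have hmemlv : ∀ x, x ∈ T.leaves ↔ μ x ≠ 0 := by
      intro x
      rw [← mem_supp]
      show x ∈ T₁.leaves ++ T₂.leaves ↔ _
      rw [List.mem_append, ← List.mem_toFinset, ← List.mem_toFinset, l₁, l₂]
      exact (Iff.symm (hunion x))
    have hfinds : ∀ x, μ x ≠ 0 → T.find? x = some (T.depth x) := by
      intro x hx
      have hxS : x ∈ S := mem_supp.2 hx
      by_cases hxA : x ∈ A
      · have hx1 : x ∈ S₁ := Finset.mem_inter.2 ⟨hxS, hxA⟩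
        have hμ₁x : μ₁ x ≠ 0 := mem_supp.1 (hsupp₁ ▸ hx1)
        have hf1 := hT₁v.finds x hμ₁x
        have hfind : T.find? x = some (T₁.depth x + 1) := by
          show ((if x ∈ A then T₁.find? x else T₂.find? x).map (· + 1)) = _
          rw [if_pos hxA, hf1]
          rfl
        exact find?_eq_depth hfind
      · have hx2 : x ∈ S₂ := Finset.mem_sdiff.2 ⟨hxS, hxA⟩
        have hμ₂x : μ₂ x ≠ 0 := mem_supp.1 (hsupp₂ ▸ hx2)
        have hf2 := hT₂v.finds x hμ₂x
        have hfind : T.find? x = some (T₂.depth x + 1) := by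
          show ((if x ∈ A then T₁.find? x else T₂.find? x).map (· + 1)) = _
          rw [if_neg hxA, hf2]
          rfl
        exact find?_eq_depth hfind
    have hnodup : T.leaves.Nodup := by
      show (T₁.leaves ++ T₂.leaves).Nodup
      rw [List.nodup_append]
      refine ⟨hT₁v.nodup, hT₂v.nodup, fun z hz1 w hz2 hzw => ?_⟩
      subst hzw
      exact hdisj12 z (l₁ ▸ List.mem_toFinset.2 hz1) (l₂ ▸ List.mem_toFinset.2 hz2)
    have hTv : IsValid T μ := ⟨hnodup, hmemlv, hfinds⟩
    have hTq : UsesQuestions T ↑Q := by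
      show DTree.questions (DTree.node A T₁ T₂) ⊆ ↑Q
      rw [DTree.questions]
      rw [Set.insert_subset_iff]
      exact ⟨Finset.mem_coe.2 hAQ, Set.union_subset hT₁q hT₂q⟩
    refine ⟨T, hTv, hTq, ?_⟩
    -- cost computation
    have hGood := good_of_valid hTv
    have hdepth1 : ∀ x ∈ S₁, T.depth x = T₁.depth x + 1 := fun x hx =>
      DTree.depth_node_yes hGood (List.mem_toFinset.1 (l₁ ▸ hx : x ∈ T₁.leaves.toFinset))
    have hdepth2 : ∀ x ∈ S₂, T.depth x = T₂.depth x + 1 := fun x hx =>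
      DTree.depth_node_no hGood (List.mem_toFinset.1 (l₂ ▸ hx : x ∈ T₂.leaves.toFinset))
    have hcsplit := Finset.sum_inter_add_sum_sdiff S A (fun x => μ x * (T.depth x : ℝ))
    have hcostT : cost T μ = (∑ x ∈ S₁, μ x * ((T.depth x : ℕ) : ℝ))
        + ∑ x ∈ S₂, μ x * ((T.depth x : ℕ) : ℝ) := by
      rw [cost_eq_sum_supp]
      exact hcsplit.symm
    have e1 : ∑ x ∈ S₁, μ x * ((T.depth x : ℕ) : ℝ)
        = w₁ * cost T₁ μ₁ + ∑ x ∈ S₁, μ x := by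
      have : ∀ x ∈ S₁, μ x * ((T.depth x : ℕ) : ℝ)
          = w₁ * (μ₁ x * (T₁.depth x : ℝ)) + μ x := by
        intro x hx
        rw [hdepth1 x hx, hscale₁ x hx]
        push_cast
        ring
      rw [Finset.sum_congr rfl this, Finset.sum_add_distrib, ← Finset.mul_sum]
      congr 2
      rw [cost_eq_sum_supp, hsupp₁]
    have e2 : ∑ x ∈ S₂, μ x * ((T.depth x : ℕ) : ℝ)
        = w₂ * cost T₂ μ₂ + ∑ x ∈ S₂, μ x := by
      have : ∀ x ∈ S₂, μ x * ((T.depth x : ℕ) : ℝ)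
          = w₂ * (μ₂ x * (T₂.depth x : ℝ)) + μ x := by
        intro x hx
        rw [hdepth2 x hx, hscale₂ x hx]
        push_cast
        ring
      rw [Finset.sum_congr rfl this, Finset.sum_add_distrib, ← Finset.mul_sum]
      congr 2
      rw [cost_eq_sum_supp, hsupp₂]
    -- bound OptCost μ₁ and μ₂ by the shifted profile
    have hopt1 : OptCost μ₁ ≤ ∑ x ∈ S₁, μ₁ x * (((dm x - 1 : ℕ)) : ℝ) := by
      obtain ⟨T', hT'v, -, hT'c⟩ := valid_of_profile hμ₁ (by rw [hsupp₁]; exact hK1)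
      have := optCost_le_cost hμ₁.1 hT'v
      rw [hT'c, hsupp₁] at this
      exact this
    have hopt2 : OptCost μ₂ ≤ ∑ x ∈ S₂, μ₂ x * (((dm x - 1 : ℕ)) : ℝ) := by
      obtain ⟨T', hT'v, -, hT'c⟩ := valid_of_profile hμ₂ (by rw [hsupp₂]; exact hK2)
      have := optCost_le_cost hμ₂.1 hT'v
      rw [hT'c, hsupp₂] at this
      exact this
    have f1 : w₁ * (∑ x ∈ S₁, μ₁ x * (((dm x - 1 : ℕ)) : ℝ))
        = ∑ x ∈ S₁, μ x * (((dm x - 1 : ℕ)) : ℝ) := by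
      rw [Finset.mul_sum]
      refine Finset.sum_congr rfl fun x hx => ?_
      rw [hscale₁ x hx]
      ring
    have f2 : w₂ * (∑ x ∈ S₂, μ₂ x * (((dm x - 1 : ℕ)) : ℝ))
        = ∑ x ∈ S₂, μ x * (((dm x - 1 : ℕ)) : ℝ) := by
      rw [Finset.mul_sum]
      refine Finset.sum_congr rfl fun x hx => ?_
      rw [hscale₂ x hx]
      ring
    -- total: final inequality
    have hfinal : cost T μ ≤ OptCost μ := by
      have g1 : ∑ x ∈ S₁, μ x * (((dm x - 1 : ℕ)) : ℝ)
          = ∑ x ∈ S₁, (μ x * ((dm x : ℕ) : ℝ) - μ x) := by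
        refine Finset.sum_congr rfl fun x hx => ?_
        have h1 := hd1 x (Finset.mem_of_mem_inter_left hx)
        rw [Nat.cast_sub h1]
        push_cast
        ring
      have g2 : ∑ x ∈ S₂, μ x * (((dm x - 1 : ℕ)) : ℝ)
          = ∑ x ∈ S₂, (μ x * ((dm x : ℕ) : ℝ) - μ x) := by
        refine Finset.sum_congr rfl fun x hx => ?_
        have h1 := hd1 x (Finset.mem_sdiff.1 hx).1
        rw [Nat.cast_sub h1]
        push_cast
        ring
      have hsum_split := Finset.sum_inter_add_sum_sdiff S A
        (fun x => μ x * ((dm x : ℕ) : ℝ) - μ x)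
      have hmu_split := Finset.sum_inter_add_sum_sdiff S A (fun x => μ x)
      have hsum_sub : ∑ x ∈ S, (μ x * ((dm x : ℕ) : ℝ) - μ x)
          = (∑ x ∈ S, μ x * ((dm x : ℕ) : ℝ)) - ∑ x ∈ S, μ x := by
        rw [Finset.sum_sub_distrib]
      have hmuS : ∑ x ∈ S, μ x = 1 := sum_supp_eq_one hμ
      have hOpt : OptCost μ = ∑ x ∈ S, μ x * ((dm x : ℕ) : ℝ) := hdmc
      have i1 : w₁ * OptCost μ₁ ≤ ∑ x ∈ S₁, (μ x * ((dm x : ℕ) : ℝ) - μ x) := by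
        rw [← g1, ← f1]
        exact mul_le_mul_of_nonneg_left hopt1 hw₁.le
      have i2 : w₂ * OptCost μ₂ ≤ ∑ x ∈ S₂, (μ x * ((dm x : ℕ) : ℝ) - μ x) := by
        rw [← g2, ← f2]
        exact mul_le_mul_of_nonneg_left hopt2 hw₂.le
      have hT1le : cost T₁ μ₁ = OptCost μ₁ := hT₁c
      have hT2le : cost T₂ μ₂ = OptCost μ₂ := hT₂c
      rw [hcostT, e1, e2, hT1le, hT2le, hOpt]
      have : ∑ x ∈ S₁, (μ x * ((dm x : ℕ) : ℝ) - μ x)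
          + ∑ x ∈ S₂, (μ x * ((dm x : ℕ) : ℝ) - μ x)
          = (∑ x ∈ S, μ x * ((dm x : ℕ) : ℝ)) - 1 := by
        rw [hS₁def, hS₂def, hsum_split, hsum_sub, hmuS]
      have hmu12 : ∑ x ∈ S₁, μ x + ∑ x ∈ S₂, μ x = 1 := by
        rw [hS₁def, hS₂def, hmu_split, hmuS]
      linarith [i1, i2]
    exact le_antisymm hfinal (optCost_le_cost hμ.1 hTv)

/-- A dyadic hitter achieves prolixity `0`. -/
theorem hitter_achieves {n : ℕ} {Q : Finset (Finset (Fin n))}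
    (hQ : ∀ ν : Fin n → ℝ, IsDistribution ν → IsDyadic ν → NonConstant ν →
      ∃ A ∈ Q, A ∈ splitters n ν) : AchievesProlixity Q 0 := by
  intro μ hμ
  obtain ⟨T, hv, hq, hc⟩ := hitter_opt hQ μ hμ
  exact ⟨T, hv, hq, by rw [hc, add_zero]⟩

end TQ

namespace TQ

theorem relDensity_nonneg (n : ℕ) (D : Finset (Finset (Fin n))) (i : ℕ) :
    0 ≤ relDensity n D i := by
  unfold relDensity
  positivity

theorem relDensity_le_one (n : ℕ) (D : Finset (Finset (Fin n))) {i : ℕ} (hi : i ≤ n) :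
    relDensity n D i ≤ 1 := by
  unfold relDensity
  have hchoose : 0 < (n.choose i : ℝ) := by
    have := Nat.choose_pos hi
    positivity
  rw [div_le_one hchoose]
  have hsub : D.filter (fun S => S.card = i) ⊆ Finset.univ.powersetCard i := by
    intro B hB
    rw [Finset.mem_powersetCard]
    exact ⟨Finset.subset_univ B, (Finset.mem_filter.1 hB).2⟩
  have := Finset.card_le_card hsub
  rw [Finset.card_powersetCard, Finset.card_univ, Fintype.card_fin] at this
  exact_mod_cast this

theorem iSup_mem_bdd (n : ℕ) (D : Finset (Finset (Fin n))) :
    ∀ i : ℕ, (⨆ _ : i ∈ Finset.Ico 1 n, relDensity n D i) ≤ 1 := by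
  intro i
  by_cases hi : i ∈ Finset.Ico 1 n
  · rw [ciSup_pos hi]
    exact relDensity_le_one n D (le_of_lt (Finset.mem_Ico.1 hi).2)
  · have : IsEmpty (i ∈ Finset.Ico 1 n) := ⟨hi⟩
    rw [Real.iSup_of_isEmpty]
    norm_num

theorem relDensity_le_max (n : ℕ) (D : Finset (Finset (Fin n))) {i : ℕ}
    (hi : i ∈ Finset.Ico 1 n) : relDensity n D i ≤ maxRelDensity n D := by
  unfold maxRelDensity
  have hbdd : BddAbove (Set.range fun i => ⨆ _ : i ∈ Finset.Ico 1 n, relDensity n D i) := by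
    refine ⟨1, ?_⟩
    rintro x ⟨j, rfl⟩
    exact iSup_mem_bdd n D j
  have h1 : (⨆ _ : i ∈ Finset.Ico 1 n, relDensity n D i) = relDensity n D i := ciSup_pos hi
  rw [← h1]
  exact le_ciSup hbdd i

theorem max_attained (n : ℕ) (hn : 2 ≤ n) (D : Finset (Finset (Fin n))) :
    ∃ i ∈ Finset.Ico 1 n, maxRelDensity n D ≤ relDensity n D i := by
  have hne : (Finset.Ico 1 n).Nonempty := ⟨1, by rw [Finset.mem_Ico]; omega⟩
  have hsup := Finset.exists_mem_eq_sup' hne (relDensity n D)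
  obtain ⟨i₀, hi₀, hi₀eq⟩ := hsup
  refine ⟨i₀, hi₀, ?_⟩
  rw [← hi₀eq]
  unfold maxRelDensity
  refine ciSup_le fun j => ?_
  by_cases hj : j ∈ Finset.Ico 1 n
  · rw [ciSup_pos hj]
    exact Finset.le_sup' _ hj
  · have : IsEmpty (j ∈ Finset.Ico 1 n) := ⟨hj⟩
    rw [Real.iSup_of_isEmpty]
    have h1 : 1 ∈ Finset.Ico 1 n := by rw [Finset.mem_Ico]; omega
    exact le_trans (relDensity_nonneg n D 1) (Finset.le_sup' _ h1)

theorem maxRelDensity_nonneg (n : ℕ) (hn : 2 ≤ n) (D : Finset (Finset (Fin n))) :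
    0 ≤ maxRelDensity n D :=
  le_trans (relDensity_nonneg n D 1)
    (relDensity_le_max n D (by rw [Finset.mem_Ico]; omega))

/-- Every non-constant dyadic distribution has a splitter of size in `[1, n-1]`. -/
theorem exists_splitter {n : ℕ} {ν : Fin n → ℝ} (hν : IsDistribution ν)
    (hdy : IsDyadic ν) (hnc : NonConstant ν) :
    ∃ A : Finset (Fin n), A ∈ splitters n ν ∧ 1 ≤ A.card ∧ A.card ≤ n - 1 := by
  have h2 := nonconstant_card hnc
  obtain ⟨e, heK, he⟩ := dyadic_exponent hν hdy h2
  obtain ⟨A, hAsub, hAsum⟩ := kraft_half heK h2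
  have hAsum' : ∑ x ∈ A, ν x = 1/2 := by
    rw [← hAsum]
    exact Finset.sum_congr rfl fun x hx => he x (hAsub hx)
  have hAne : A.Nonempty := by
    rcases Finset.eq_empty_or_nonempty A with rfl | h
    · rw [Finset.sum_empty] at hAsum'; norm_num at hAsum'
    · exact h
  have hAneuniv : A ≠ Finset.univ := by
    intro h
    rw [h] at hAsum'
    rw [hν.2] at hAsum'
    norm_num at hAsum'
  have hcard : A.card < n := by
    have := Finset.card_lt_card (Finset.ssubset_univ_iff.2 hAneuniv)
    rwa [Finset.card_univ, Fintype.card_fin] at this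
  exact ⟨A, mem_splitters.2 hAsum', Finset.card_pos.2 hAne, by omega⟩

/-- The infimum defining `rhoMin` is attained. -/
theorem rhoMin_attained (n : ℕ) (hn : 2 ≤ n) :
    ∃ μ : Fin n → ℝ, IsDistribution μ ∧ IsDyadic μ ∧ NonConstant μ ∧
      rhoMin n = maxRelDensity n (splitters n μ) := by
  set R := { ρ | ∃ μ : Fin n → ℝ, IsDistribution μ ∧ IsDyadic μ ∧ NonConstant μ ∧
    ρ = maxRelDensity n (splitters n μ) } with hR
  have hfin : R.Finite := by
    have hsub : R ⊆ (fun D => maxRelDensity n D) '' Set.univ := by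
      rintro ρ ⟨μ, -, -, -, rfl⟩
      exact ⟨splitters n μ, Set.mem_univ _, rfl⟩
    exact Set.Finite.subset (Set.Finite.image _ (Set.finite_univ)) hsub
  have hne : R.Nonempty := by
    -- the two-point distribution
    have h0 : (0 : ℕ) < n := by omega
    have h1 : (1 : ℕ) < n := by omega
    set a : Fin n := ⟨0, h0⟩
    set b : Fin n := ⟨1, h1⟩
    have hab : a ≠ b := by
      intro h
      have := congrArg Fin.val h
      simp [a, b] at this
    set μ0 : Fin n → ℝ := fun x => if x = a ∨ x = b then 1/2 else 0 with hμ0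
    have hzero : ∀ x ∈ Finset.univ, x ∉ ({a, b} : Finset (Fin n)) → μ0 x = 0 := by
      intro x _ hx
      have hxa : x ≠ a := fun h => hx (by rw [h]; exact Finset.mem_insert_self a {b})
      have hxb : x ≠ b := fun h =>
        hx (by rw [h]; exact Finset.mem_insert_of_mem (Finset.mem_singleton_self b))
      simp [hμ0, hxa, hxb]
    have hsum : ∑ x, μ0 x = 1 := by
      rw [← Finset.sum_subset (Finset.subset_univ ({a, b} : Finset (Fin n))) hzero,
        Finset.sum_pair hab]
      simp [hμ0]
      norm_num
    have hdist : IsDistribution μ0 := by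
      refine ⟨fun x => ?_, hsum⟩
      by_cases h : x = a ∨ x = b <;> simp [hμ0, h]
    have hdy : IsDyadic μ0 := by
      intro x
      by_cases h : x = a ∨ x = b
      · exact Or.inr ⟨1, by simp [hμ0, h, zpow_one]⟩
      · exact Or.inl (by simp [hμ0, h])
    have hnc : NonConstant μ0 := ⟨a, b, hab, by simp [hμ0], by simp [hμ0]⟩
    exact ⟨maxRelDensity n (splitters n μ0), μ0, hdist, hdy, hnc, rfl⟩
  have hmem := hne.csInf_mem hfin
  obtain ⟨μ, h1, h2, h3, h4⟩ := hmem
  exact ⟨μ, h1, h2, h3, by rw [show rhoMin n = sInf R from rfl, h4]⟩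

theorem rhoMin_pos (n : ℕ) (hn : 2 ≤ n) : 0 < rhoMin n := by
  obtain ⟨μ, hdist, hdy, hnc, heq⟩ := rhoMin_attained n hn
  obtain ⟨A, hAsp, hA1, hA2⟩ := exists_splitter hdist hdy hnc
  set i := A.card with hi
  have hiIco : i ∈ Finset.Ico 1 n := by rw [Finset.mem_Ico]; omega
  have hpos : 0 < relDensity n (splitters n μ) i := by
    unfold relDensity
    have hchoose : 0 < (n.choose i : ℝ) := by
      have := Nat.choose_pos (show i ≤ n by omega)
      positivity
    refine div_pos ?_ hchoose
    have : A ∈ (splitters n μ).filter (fun S => S.card = i) :=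
      Finset.mem_filter.2 ⟨hAsp, rfl⟩
    have := Finset.card_pos.2 ⟨A, this⟩
    exact_mod_cast this
  rw [heq]
  exact lt_of_lt_of_le hpos (relDensity_le_max n _ hiIco)

theorem rhoMin_le_one (n : ℕ) (hn : 2 ≤ n) : rhoMin n ≤ 1 := by
  obtain ⟨μ, hdist, hdy, hnc, heq⟩ := rhoMin_attained n hn
  obtain ⟨i, hiIco, hile⟩ := max_attained n hn (splitters n μ)
  rw [heq]
  exact le_trans hile (relDensity_le_one n _ (le_of_lt (Finset.mem_Ico.1 hiIco).2))

end TQ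

namespace TQ

theorem card_perm_image_le {n : ℕ} (A B : Finset (Fin n)) (hAB : A.card = B.card) :
    (Finset.univ.filter (fun σ : Equiv.Perm (Fin n) => A.image σ = B)).card
      ≤ Nat.factorial A.card * Nat.factorial (n - A.card) := by
  classical
  set P := Finset.univ.filter (fun σ : Equiv.Perm (Fin n) => A.image σ = B) with hP
  have himg : ∀ σ : Equiv.Perm (Fin n), σ ∈ P → A.image σ = B := fun σ hσ =>
    (Finset.mem_filter.1 hσ).2
  -- injection into pairs of embeddings
  have hmemB : ∀ (σ : Equiv.Perm (Fin n)) (hσ : σ ∈ P) (a : Fin n), a ∈ A → σ a ∈ B := by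
    intro σ hσ a ha
    rw [← himg σ hσ]
    exact Finset.mem_image_of_mem σ ha
  have hmemBc : ∀ (σ : Equiv.Perm (Fin n)) (hσ : σ ∈ P) (a : Fin n), a ∈ Aᶜ → σ a ∈ Bᶜ := by
    intro σ hσ a ha
    rw [Finset.mem_compl]
    intro hb
    rw [← himg σ hσ, Finset.mem_image] at hb
    obtain ⟨a', ha', haa⟩ := hb
    rw [Finset.mem_compl] at ha
    exact ha (σ.injective haa ▸ ha')
  set F : {σ : Equiv.Perm (Fin n) // σ ∈ P} → ((↥A ↪ ↥B) × (↥(Aᶜ) ↪ ↥(Bᶜ))) := fun σp =>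
    (⟨fun a => ⟨σp.1 a.1, hmemB σp.1 σp.2 a.1 a.2⟩,
        fun a b hab => Subtype.ext (σp.1.injective (congrArg Subtype.val hab))⟩,
     ⟨fun a => ⟨σp.1 a.1, hmemBc σp.1 σp.2 a.1 a.2⟩,
        fun a b hab => Subtype.ext (σp.1.injective (congrArg Subtype.val hab))⟩) with hF
  have hFinj : Function.Injective F := by
    rintro ⟨σ, hσ⟩ ⟨τ, hτ⟩ heq
    have h1 := congrArg Prod.fst heq
    have h2 := congrArg Prod.snd heq
    refine Subtype.ext (Equiv.ext fun x => ?_)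
    by_cases hx : x ∈ A
    · have := congrArg (fun e => ((e : ↥A ↪ ↥B) ⟨x, hx⟩ : ↥B)) h1
      exact congrArg Subtype.val this
    · have hx' : x ∈ Aᶜ := Finset.mem_compl.2 hx
      have := congrArg (fun e => ((e : ↥(Aᶜ) ↪ ↥(Bᶜ)) ⟨x, hx'⟩ : ↥(Bᶜ))) h2
      exact congrArg Subtype.val this
  have hcard1 : P.card = Fintype.card {σ : Equiv.Perm (Fin n) // σ ∈ P} :=
    (Fintype.card_coe P).symm
  have hle := Fintype.card_le_of_injective F hFinj
  rw [← hcard1] at hle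
  have hBA : Fintype.card ↥B = Fintype.card ↥A := by
    rw [Fintype.card_coe, Fintype.card_coe, hAB]
  have hBcAc : Fintype.card ↥(Bᶜ) = Fintype.card ↥(Aᶜ) := by
    rw [Fintype.card_coe, Fintype.card_coe, Finset.card_compl, Finset.card_compl, hAB]
  have hcard2 : Fintype.card ((↥A ↪ ↥B) × (↥(Aᶜ) ↪ ↥(Bᶜ)))
      = Nat.factorial A.card * Nat.factorial (n - A.card) := by
    rw [Fintype.card_prod, Fintype.card_embedding_eq, Fintype.card_embedding_eq,
      hBA, hBcAc, Nat.descFactorial_self, Nat.descFactorial_self,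
      Fintype.card_coe, Fintype.card_coe, Finset.card_compl, Fintype.card_fin]
  rw [hcard2] at hle
  exact hle

theorem card_lower {n : ℕ} (hn : 2 ≤ n) {Q : Finset (Finset (Fin n))}
    (hach : AchievesProlixity Q 0) : 1 / rhoMin n ≤ (Q.card : ℝ) := by
  classical
  obtain ⟨μ, hdist, hdy, hnc, heq⟩ := rhoMin_attained n hn
  have hρpos := rhoMin_pos n hn
  set D := splitters n μ with hD
  set ρ := rhoMin n with hρ
  have hcover : ∀ σ : Equiv.Perm (Fin n), ∃ A ∈ Q, A.image σ ∈ D := by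
    intro σ
    set μσ : Fin n → ℝ := fun x => μ (σ x) with hμσ
    have hdistσ : IsDistribution μσ :=
      ⟨fun x => hdist.1 _, by
        show ∑ x, μ (σ x) = 1
        rw [Equiv.sum_comp σ μ]
        exact hdist.2⟩
    have hdyσ : IsDyadic μσ := fun x => hdy (σ x)
    have hncσ : NonConstant μσ := by
      obtain ⟨x, y, hxy, hx, hy⟩ := hnc
      refine ⟨σ.symm x, σ.symm y, fun h => hxy ?_, ?_, ?_⟩
      · have := congrArg σ h
        rwa [Equiv.apply_symm_apply, Equiv.apply_symm_apply] at this
      · show μ (σ (σ.symm x)) ≠ 0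
        rwa [Equiv.apply_symm_apply]
      · show μ (σ (σ.symm y)) ≠ 0
        rwa [Equiv.apply_symm_apply]
    obtain ⟨T, hTv, hTq, hTc⟩ := hach μσ hdistσ
    have hTc' : cost T μσ ≤ OptCost μσ := by linarith [hTc]
    obtain ⟨q, hqT, hqsp⟩ := question_splitter hdistσ hdyσ hncσ hTv hTc'
    refine ⟨q, Finset.mem_coe.1 (hTq hqT), ?_⟩
    rw [hD, mem_splitters]
    have hs := mem_splitters.1 hqsp
    rw [Finset.sum_image (fun x _ y _ h => σ.injective h)]
    exact hs
  have hcount : (Finset.univ : Finset (Equiv.Perm (Fin n))).card ≤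
      ∑ A ∈ Q, (Finset.univ.filter
        (fun σ : Equiv.Perm (Fin n) => A.image σ ∈ D)).card := by
    refine le_trans (Finset.card_le_card ?_) Finset.card_biUnion_le
    intro σ _
    rw [Finset.mem_biUnion]
    obtain ⟨A, hA, hAσ⟩ := hcover σ
    exact ⟨A, hA, Finset.mem_filter.2 ⟨Finset.mem_univ _, hAσ⟩⟩
  have hfact : (0:ℝ) < Nat.factorial n := by positivity
  have hfiber : ∀ A ∈ Q, ((Finset.univ.filter
      (fun σ : Equiv.Perm (Fin n) => A.image σ ∈ D)).card : ℝ) ≤ ρ * Nat.factorial n := by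
    intro A _
    set i := A.card with hi
    rcases Nat.eq_zero_or_pos i with hi0 | hipos
    · have hA : A = ∅ := Finset.card_eq_zero.1 hi0
      have : Finset.univ.filter (fun σ : Equiv.Perm (Fin n) => A.image σ ∈ D) = ∅ := by
        refine Finset.filter_eq_empty_iff.2 fun σ _ => ?_
        rw [hA, Finset.image_empty, hD, mem_splitters]
        rw [Finset.sum_empty]
        norm_num
      rw [this]
      simp only [Finset.card_empty, Nat.cast_zero]
      positivity
    rcases Nat.lt_or_ge i n with hin | hin
    · -- 1 ≤ i ≤ n-1
      have hiIco : i ∈ Finset.Ico 1 n := by rw [Finset.mem_Ico]; omega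
      set Di := D.filter (fun S => S.card = i) with hDi
      have hsub : Finset.univ.filter (fun σ : Equiv.Perm (Fin n) => A.image σ ∈ D)
          ⊆ Di.biUnion (fun B => Finset.univ.filter
            (fun σ : Equiv.Perm (Fin n) => A.image σ = B)) := by
        intro σ hσ
        rw [Finset.mem_biUnion]
        refine ⟨A.image σ, Finset.mem_filter.2 ⟨(Finset.mem_filter.1 hσ).2, ?_⟩,
          Finset.mem_filter.2 ⟨Finset.mem_univ _, rfl⟩⟩
        rw [Finset.card_image_of_injective A σ.injective]
      have hbound : ∀ B ∈ Di, (Finset.univ.filter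
          (fun σ : Equiv.Perm (Fin n) => A.image σ = B)).card ≤ Nat.factorial i * Nat.factorial (n - i) := by
        intro B hB
        have hBc : B.card = i := (Finset.mem_filter.1 hB).2
        exact card_perm_image_le A B (by rw [hBc])
      have h1 : (Finset.univ.filter (fun σ : Equiv.Perm (Fin n) => A.image σ ∈ D)).card
          ≤ Di.card * (Nat.factorial i * Nat.factorial (n - i)) := by
        calc _ ≤ (Di.biUnion (fun B => Finset.univ.filter
              (fun σ : Equiv.Perm (Fin n) => A.image σ = B))).card := Finset.card_le_card hsub
        _ ≤ ∑ B ∈ Di, (Finset.univ.filter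
              (fun σ : Equiv.Perm (Fin n) => A.image σ = B)).card := Finset.card_biUnion_le
        _ ≤ ∑ _B ∈ Di, Nat.factorial i * Nat.factorial (n - i) := Finset.sum_le_sum hbound
        _ = Di.card * (Nat.factorial i * Nat.factorial (n - i)) := by rw [Finset.sum_const, smul_eq_mul]
      have hDile : (Di.card : ℝ) ≤ ρ * (n.choose i : ℝ) := by
        have hrd : relDensity n D i ≤ ρ := by
          rw [heq]
          exact relDensity_le_max n D hiIco
        unfold relDensity at hrd
        have hchoose : (0:ℝ) < (n.choose i : ℝ) := by
          have := Nat.choose_pos (le_of_lt hin)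
          positivity
        rw [div_le_iff₀ hchoose] at hrd
        exact hrd
      have hfactid : (n.choose i : ℝ) * (Nat.factorial i * Nat.factorial (n - i)) = Nat.factorial n := by
        have := Nat.choose_mul_factorial_mul_factorial (le_of_lt hin)
        push_cast [← this]
        ring
      calc ((Finset.univ.filter (fun σ : Equiv.Perm (Fin n) => A.image σ ∈ D)).card : ℝ)
          ≤ (Di.card : ℝ) * (Nat.factorial i * Nat.factorial (n - i)) := by exact_mod_cast h1
      _ ≤ ρ * (n.choose i : ℝ) * (Nat.factorial i * Nat.factorial (n - i)) := by
          refine mul_le_mul_of_nonneg_right hDile (by positivity)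
      _ = ρ * Nat.factorial n := by rw [mul_assoc, hfactid]
    · -- i = n : A = univ
      have hin' : i = n := by
        have : A.card ≤ n := by
          have h := Finset.card_le_univ A
          simpa using h
        omega
      have hA : A = Finset.univ := A.card_eq_iff_eq_univ.1 (by rw [Fintype.card_fin]; omega)
      have hempty : Finset.univ.filter (fun σ : Equiv.Perm (Fin n) => A.image σ ∈ D) = ∅ := by
        refine Finset.filter_eq_empty_iff.2 fun σ _ => ?_
        have himg : A.image σ = Finset.univ := by
          rw [hA]
          exact Finset.image_univ_equiv σ
        rw [himg, hD, mem_splitters, hdist.2]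
        norm_num
      rw [hempty]
      simp only [Finset.card_empty, Nat.cast_zero]
      positivity
  -- assemble
  have hperm : (Finset.univ : Finset (Equiv.Perm (Fin n))).card = Nat.factorial n := by
    rw [Finset.card_univ, Fintype.card_perm, Fintype.card_fin]
  have hsumle : (Nat.factorial n : ℝ) ≤ (Q.card : ℝ) * (ρ * Nat.factorial n) := by
    have h2 : ((Finset.univ : Finset (Equiv.Perm (Fin n))).card : ℝ)
        ≤ ∑ A ∈ Q, ((Finset.univ.filter
          (fun σ : Equiv.Perm (Fin n) => A.image σ ∈ D)).card : ℝ) := by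
      exact_mod_cast hcount
    have h3 : ∑ A ∈ Q, ((Finset.univ.filter
        (fun σ : Equiv.Perm (Fin n) => A.image σ ∈ D)).card : ℝ)
        ≤ ∑ _A ∈ Q, ρ * Nat.factorial n := Finset.sum_le_sum hfiber
    rw [Finset.sum_const, nsmul_eq_mul] at h3
    rw [hperm] at h2
    linarith
  have h4 : (1:ℝ) ≤ (Q.card : ℝ) * ρ := by
    have h5 : 1 * (Nat.factorial n : ℝ) ≤ ((Q.card : ℝ) * ρ) * Nat.factorial n := by
      rw [one_mul]
      calc (Nat.factorial n : ℝ) ≤ (Q.card : ℝ) * (ρ * Nat.factorial n) := hsumle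
      _ = ((Q.card:ℝ) * ρ) * Nat.factorial n := by ring
    exact le_of_mul_le_mul_right (by linarith) hfact
  rw [div_le_iff₀ hρpos]
  exact h4

theorem uOpt_lower {n : ℕ} (hn : 2 ≤ n) : 1 / rhoMin n ≤ (uOpt n 0 : ℝ) := by
  have hset : { k | ∃ Q : Finset (Finset (Fin n)), Q.card = k ∧
      AchievesProlixity Q (0:ℝ) }.Nonempty := by
    refine ⟨(Finset.univ : Finset (Finset (Fin n))).card, Finset.univ, rfl,
      hitter_achieves ?_⟩
    intro ν h1 h2 h3
    obtain ⟨A, hA, -, -⟩ := exists_splitter h1 h2 h3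
    exact ⟨A, Finset.mem_univ A, hA⟩
  have hmem := Nat.sInf_mem hset
  obtain ⟨Q, hQcard, hQach⟩ := hmem
  have : uOpt n 0 = Q.card := hQcard.symm
  rw [this]
  exact card_lower hn hQach

end TQ

namespace TQ

open scoped Classical in
/-- All candidate dyadic distributions, by enumerating exponent patterns. -/
noncomputable def dyadicSet (n : ℕ) : Finset (Fin n → ℝ) :=
  (Finset.univ : Finset (Fin n → Fin n)).image
    (fun g x => if (g x : ℕ) = 0 then 0 else ((1:ℝ)/2)^(g x : ℕ))

theorem dyadicSet_card (n : ℕ) : (dyadicSet n).card ≤ n^n := by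
  classical
  refine le_trans (Finset.card_image_le) ?_
  rw [Finset.card_univ, Fintype.card_fun, Fintype.card_fin]

theorem mem_dyadicSet {n : ℕ} (hn : 2 ≤ n) {μ : Fin n → ℝ} (hμ : IsDistribution μ)
    (hdy : IsDyadic μ) (hnc : NonConstant μ) : μ ∈ dyadicSet n := by
  classical
  have h2 := nonconstant_card hnc
  obtain ⟨e, heK, he⟩ := dyadic_exponent hμ hdy h2
  have hbound : ∀ x ∈ supp μ, e x ≤ n - 1 := by
    intro x hx
    have h1 := kraft_le heK x hx
    have h3 : (supp μ).card ≤ n := by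
      have := Finset.card_le_univ (supp μ)
      simpa using this
    omega
  have hone : ∀ x ∈ supp μ, 1 ≤ e x := fun x hx => kraft_one_le heK h2 hx
  set g : Fin n → Fin n := fun x =>
    if hx : x ∈ supp μ then ⟨e x, by have := hbound x hx; omega⟩ else ⟨0, by omega⟩ with hg
  rw [dyadicSet, Finset.mem_image]
  refine ⟨g, Finset.mem_univ g, ?_⟩
  funext x
  by_cases hx : x ∈ supp μ
  · have hgx : (g x : ℕ) = e x := by rw [hg]; simp [hx]
    rw [hgx, if_neg (by have := hone x hx; omega), ← he x hx]
  · have hgx : (g x : ℕ) = 0 := by rw [hg]; simp [hx]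
    rw [hgx, if_pos rfl]
    by_contra h
    exact hx (mem_supp.2 fun h0 => h h0.symm)

theorem rhoMin_le_density {n : ℕ} (hn : 2 ≤ n) {μ : Fin n → ℝ} (h1 : IsDistribution μ)
    (h2 : IsDyadic μ) (h3 : NonConstant μ) :
    ∃ i ∈ Finset.Ico 1 n, rhoMin n ≤ relDensity n (splitters n μ) i := by
  have hmem : maxRelDensity n (splitters n μ) ∈ { ρ | ∃ ν : Fin n → ℝ,
      IsDistribution ν ∧ IsDyadic ν ∧ NonConstant ν ∧
      ρ = maxRelDensity n (splitters n ν) } := ⟨μ, h1, h2, h3, rfl⟩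
  have hbdd : BddBelow { ρ | ∃ ν : Fin n → ℝ,
      IsDistribution ν ∧ IsDyadic ν ∧ NonConstant ν ∧
      ρ = maxRelDensity n (splitters n ν) } := by
    refine ⟨0, ?_⟩
    rintro ρ ⟨ν, -, -, -, rfl⟩
    exact maxRelDensity_nonneg n hn _
  have hle : rhoMin n ≤ maxRelDensity n (splitters n μ) := csInf_le hbdd hmem
  obtain ⟨i, hi, hile⟩ := max_attained n hn (splitters n μ)
  exact ⟨i, hi, le_trans hle hile⟩

theorem greedy_step {n : ℕ} (hn : 2 ≤ n) (F : Finset (Fin n → ℝ))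
    (hF : ∀ μ ∈ F, IsDistribution μ ∧ IsDyadic μ ∧ NonConstant μ) (hne : F.Nonempty) :
    ∃ A : Finset (Fin n), ((F.filter (fun μ => A ∉ splitters n μ)).card : ℝ)
      ≤ (1 - rhoMin n / n) * F.card := by
  classical
  set ρ := rhoMin n with hρ
  have hρpos := rhoMin_pos n hn
  -- choose a dense slice index for each μ
  have H : ∀ μ ∈ F, ∃ i, i ∈ Finset.Ico 1 n ∧ ρ ≤ relDensity n (splitters n μ) i := by
    intro μ hμ
    obtain ⟨h1, h2, h3⟩ := hF μ hμ
    obtain ⟨i, hi, hle⟩ := rhoMin_le_density hn h1 h2 h3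
    exact ⟨i, hi, hle⟩
  choose! iF hiF hiFle using H
  have hpart : F.card = ∑ i ∈ Finset.Ico 1 n, (F.filter (fun μ => iF μ = i)).card :=
    Finset.card_eq_sum_card_fiberwise hiF
  have hIcone : (Finset.Ico 1 n).Nonempty := ⟨1, by rw [Finset.mem_Ico]; omega⟩
  have hIcocard : (Finset.Ico 1 n).card = n - 1 := Nat.card_Ico 1 n
  -- pigeonhole: some slice index captures ≥ |F|/n distributions
  have hnpos : (0:ℝ) < n := by positivity
  have hpigeon : ∃ i ∈ Finset.Ico 1 n,
      (F.card : ℝ) ≤ (n:ℝ) * ((F.filter (fun μ => iF μ = i)).card : ℝ) := by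
    by_contra hcon
    push_neg at hcon
    have hsum : (n:ℝ) * (F.card:ℝ) < ((Finset.Ico 1 n).card : ℝ) * (F.card : ℝ) := by
      calc (n:ℝ) * (F.card:ℝ)
          = ∑ i ∈ Finset.Ico 1 n, (n:ℝ) * ((F.filter (fun μ => iF μ = i)).card : ℝ) := by
            rw [← Finset.mul_sum]
            congr 1
            exact_mod_cast hpart
      _ < ∑ _i ∈ Finset.Ico 1 n, (F.card : ℝ) :=
            Finset.sum_lt_sum_of_nonempty hIcone (fun i hi => hcon i hi)
      _ = _ := by rw [Finset.sum_const, nsmul_eq_mul]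
    have hFpos : (0:ℝ) < F.card := by exact_mod_cast Finset.card_pos.2 hne
    have hcast : ((Finset.Ico 1 n).card : ℝ) ≤ (n:ℝ) := by
      rw [hIcocard]
      exact_mod_cast (by omega : n - 1 ≤ n)
    have := mul_le_mul_of_nonneg_right hcast hFpos.le
    linarith
  obtain ⟨i₀, hi₀Ico, hi₀⟩ := hpigeon
  set Fi := F.filter (fun μ => iF μ = i₀) with hFi
  -- double counting over i₀-subsets
  set P := (Finset.univ : Finset (Fin n)).powersetCard i₀ with hP
  have hPcard : P.card = n.choose i₀ := by
    rw [hP, Finset.card_powersetCard, Finset.card_univ, Fintype.card_fin]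
  have hchoosepos : (0:ℝ) < (n.choose i₀ : ℝ) := by
    have := Nat.choose_pos (le_of_lt (Finset.mem_Ico.1 hi₀Ico).2)
    positivity
  have hdense : ∀ μ ∈ Fi, ρ * (n.choose i₀ : ℝ)
      ≤ (((splitters n μ).filter (fun S => S.card = i₀)).card : ℝ) := by
    intro μ hμ
    obtain ⟨hμF, hiμ⟩ := Finset.mem_filter.1 hμ
    have := hiFle μ hμF
    rw [hiμ] at this
    unfold relDensity at this
    rw [le_div_iff₀ hchoosepos] at this
    linarith
  have hswap : ∑ B ∈ P, ((Fi.filter (fun μ => B ∈ splitters n μ)).card : ℝ)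
      = ∑ μ ∈ Fi, (((splitters n μ).filter (fun S => S.card = i₀)).card : ℝ) := by
    have e1 : ∀ B ∈ P, ((Fi.filter (fun μ => B ∈ splitters n μ)).card : ℝ)
        = ∑ μ ∈ Fi, if B ∈ splitters n μ then (1:ℝ) else 0 := by
      intro B _
      rw [Finset.sum_boole]
    have e2 : ∀ μ ∈ Fi, (((splitters n μ).filter (fun S => S.card = i₀)).card : ℝ)
        = ∑ B ∈ P, if B ∈ splitters n μ then (1:ℝ) else 0 := by
      intro μ _
      rw [Finset.sum_boole]
      congr 1
      apply congrArg
      ext B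
      rw [Finset.mem_filter, Finset.mem_filter, hP, Finset.mem_powersetCard]
      constructor
      · rintro ⟨h1, h2⟩
        exact ⟨⟨Finset.subset_univ B, h2⟩, h1⟩
      · rintro ⟨⟨-, h2⟩, h1⟩
        exact ⟨h1, h2⟩
    rw [Finset.sum_congr rfl e1, Finset.sum_comm, ← Finset.sum_congr rfl e2]
  have htotal : (Fi.card : ℝ) * (ρ * (n.choose i₀ : ℝ))
      ≤ ∑ B ∈ P, ((Fi.filter (fun μ => B ∈ splitters n μ)).card : ℝ) := by
    rw [hswap]
    calc (Fi.card : ℝ) * (ρ * (n.choose i₀ : ℝ))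
        = ∑ _μ ∈ Fi, ρ * (n.choose i₀ : ℝ) := by rw [Finset.sum_const, nsmul_eq_mul]
    _ ≤ _ := Finset.sum_le_sum hdense
  have hPne : P.Nonempty := by
    rw [← Finset.card_pos, hPcard]
    exact Nat.choose_pos (le_of_lt (Finset.mem_Ico.1 hi₀Ico).2)
  have hbest : ∃ B ∈ P, ρ * (Fi.card : ℝ)
      ≤ ((Fi.filter (fun μ => B ∈ splitters n μ)).card : ℝ) := by
    by_contra hcon
    push_neg at hcon
    have : ∑ B ∈ P, ((Fi.filter (fun μ => B ∈ splitters n μ)).card : ℝ)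
        < ∑ _B ∈ P, ρ * (Fi.card : ℝ) := Finset.sum_lt_sum_of_nonempty hPne hcon
    rw [Finset.sum_const, nsmul_eq_mul, hPcard] at this
    nlinarith
  obtain ⟨A, -, hA⟩ := hbest
  refine ⟨A, ?_⟩
  -- the unhit part shrinks
  have hsplit := Finset.card_filter_add_card_filter_not
    (s := F) (p := fun μ => A ∈ splitters n μ)
  have hmono : (Fi.filter (fun μ => A ∈ splitters n μ)).card
      ≤ (F.filter (fun μ => A ∈ splitters n μ)).card := by
    refine Finset.card_le_card ?_
    intro μ hμ
    obtain ⟨h1, h2⟩ := Finset.mem_filter.1 hμ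
    exact Finset.mem_filter.2 ⟨(Finset.mem_filter.1 h1).1, h2⟩
  have hFidiv : (F.card : ℝ) / n ≤ (Fi.card : ℝ) := by
    rw [div_le_iff₀ hnpos]
    calc (F.card : ℝ) ≤ (n:ℝ) * (Fi.card : ℝ) := hi₀
    _ = (Fi.card : ℝ) * n := by ring
  have hlow : ρ * ((F.card : ℝ) / n) ≤ ((F.filter (fun μ => A ∈ splitters n μ)).card : ℝ) := by
    calc ρ * ((F.card : ℝ) / n) ≤ ρ * (Fi.card : ℝ) := by
          refine mul_le_mul_of_nonneg_left hFidiv hρpos.le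
    _ ≤ ((Fi.filter (fun μ => A ∈ splitters n μ)).card : ℝ) := hA
    _ ≤ _ := by exact_mod_cast hmono
  have hcast : ((F.filter (fun μ => ¬ A ∈ splitters n μ)).card : ℝ)
      = (F.card : ℝ) - ((F.filter (fun μ => A ∈ splitters n μ)).card : ℝ) := by
    have := hsplit
    have h1 : ((F.filter (fun μ => A ∈ splitters n μ)).card : ℝ)
        + ((F.filter (fun μ => ¬ A ∈ splitters n μ)).card : ℝ) = (F.card : ℝ) := by
      exact_mod_cast this
    linarith
  rw [hcast]
  have hexp : ρ * ((F.card : ℝ) / n) = ρ / n * F.card := by ring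
  rw [hexp] at hlow
  have hgoal : (1 - ρ/n) * (F.card:ℝ) = (F.card:ℝ) - ρ/n * F.card := by ring
  rw [hgoal]
  linarith [hlow]

end TQ

namespace TQ

theorem greedy_iter {n : ℕ} (hn : 2 ≤ n) :
    ∀ (k : ℕ) (F : Finset (Fin n → ℝ)),
      (∀ μ ∈ F, IsDistribution μ ∧ IsDyadic μ ∧ NonConstant μ) →
      ∃ Q : Finset (Finset (Fin n)), Q.card ≤ k ∧
        ((F.filter (fun μ => ∀ A ∈ Q, A ∉ splitters n μ)).card : ℝ)
          ≤ (1 - rhoMin n / n)^k * F.card := by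
  classical
  have hfac0 : (0:ℝ) ≤ 1 - rhoMin n / n := by
    have h1 := rhoMin_le_one n hn
    have hdiv : rhoMin n / n ≤ 1 := by
      rw [div_le_one (by positivity : (0:ℝ) < n)]
      calc rhoMin n ≤ 1 := h1
      _ ≤ n := by exact_mod_cast (by omega : 1 ≤ n)
    linarith
  intro k
  induction k with
  | zero =>
    intro F hF
    refine ⟨∅, le_refl 0, ?_⟩
    rw [pow_zero, one_mul]
    exact_mod_cast Finset.card_le_card (Finset.filter_subset _ F)
  | succ k ihk =>
    intro F hF
    rcases F.eq_empty_or_nonempty with rfl | hne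
    · refine ⟨∅, by simp, ?_⟩
      rw [Finset.filter_empty]
      simp
    · obtain ⟨A, hA⟩ := greedy_step hn F hF hne
      set F' := F.filter (fun μ => A ∉ splitters n μ) with hF'
      have hF'h : ∀ μ ∈ F', IsDistribution μ ∧ IsDyadic μ ∧ NonConstant μ :=
        fun μ hμ => hF μ (Finset.mem_of_mem_filter μ hμ)
      obtain ⟨Q', hQ'card, hQ'⟩ := ihk F' hF'h
      refine ⟨insert A Q', le_trans (Finset.card_insert_le A Q') (by omega), ?_⟩
      have hsub : F.filter (fun μ => ∀ B ∈ insert A Q', B ∉ splitters n μ)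
          ⊆ F'.filter (fun μ => ∀ B ∈ Q', B ∉ splitters n μ) := by
        intro μ hμ
        obtain ⟨h1, h2⟩ := Finset.mem_filter.1 hμ
        exact Finset.mem_filter.2
          ⟨Finset.mem_filter.2 ⟨h1, h2 A (Finset.mem_insert_self A Q')⟩,
            fun B hB => h2 B (Finset.mem_insert_of_mem hB)⟩
      calc ((F.filter (fun μ => ∀ B ∈ insert A Q', B ∉ splitters n μ)).card : ℝ)
          ≤ ((F'.filter (fun μ => ∀ B ∈ Q', B ∉ splitters n μ)).card : ℝ) := by
            exact_mod_cast Finset.card_le_card hsub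
      _ ≤ (1 - rhoMin n / n)^k * F'.card := hQ'
      _ ≤ (1 - rhoMin n / n)^k * ((1 - rhoMin n / n) * F.card) :=
            mul_le_mul_of_nonneg_left hA (pow_nonneg hfac0 k)
      _ = (1 - rhoMin n / n)^(k+1) * F.card := by ring

theorem uOpt_upper {n : ℕ} (hn : 2 ≤ n) :
    (uOpt n 0 : ℝ) ≤ (n:ℝ)^2 * (Nat.clog 2 n : ℝ) * (1 / rhoMin n) := by
  classical
  set ρ := rhoMin n with hρdef
  have hρpos := rhoMin_pos n hn
  have hρ1 := rhoMin_le_one n hn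
  set L : ℕ := Nat.clog 2 n with hL
  have hL1 : 1 ≤ L := Nat.clog_pos (by omega) (by omega)
  set K : ℕ := ⌊(n:ℝ)^2 * L / ρ⌋₊ with hK
  have hnpos : (0:ℝ) < n := by positivity
  have hKle : (K:ℝ) ≤ (n:ℝ)^2 * L / ρ := Nat.floor_le (by positivity)
  set F := (dyadicSet n).filter
    (fun μ => IsDistribution μ ∧ IsDyadic μ ∧ NonConstant μ) with hF
  have hFh : ∀ μ ∈ F, IsDistribution μ ∧ IsDyadic μ ∧ NonConstant μ :=
    fun μ hμ => (Finset.mem_filter.1 hμ).2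
  obtain ⟨Q, hQcard, hQres⟩ := greedy_iter hn K F hFh
  have hFcard : (F.card : ℝ) ≤ (n:ℝ)^n := by
    have h1 : F.card ≤ n^n :=
      le_trans (Finset.card_le_card (Finset.filter_subset _ _)) (dyadicSet_card n)
    exact_mod_cast h1
  have hfac0 : (0:ℝ) ≤ 1 - ρ / n := by
    have hdiv : ρ / n ≤ 1 := by
      rw [div_le_one hnpos]
      calc ρ ≤ 1 := hρ1
      _ ≤ n := by exact_mod_cast (by omega : 1 ≤ n)
    linarith
  have hresidual : ((F.filter (fun μ => ∀ A ∈ Q, A ∉ splitters n μ)).card : ℝ) < 1 := by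
    refine lt_of_le_of_lt hQres ?_
    have hexp1 : (1 - ρ/n) ≤ Real.exp (-(ρ/n)) := by
      have := Real.add_one_le_exp (-(ρ/n))
      linarith
    have hpow : (1 - ρ/n)^K ≤ Real.exp (-(ρ/n))^K := pow_le_pow_left₀ hfac0 hexp1 K
    have hexpK : Real.exp (-(ρ/n))^K = Real.exp (-((K:ℝ) * (ρ/n))) := by
      rw [← Real.exp_nat_mul]
      congr 1
      ring
    -- key numeric inequality : n^n < exp(K ρ/n)
    have hlogn : Real.log n ≤ (L:ℝ) * Real.log 2 := by
      have h2L : (n:ℕ) ≤ 2 ^ L := Nat.le_pow_clog (by omega) n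
      have h2L' : (n:ℝ) ≤ (2:ℝ) ^ L := by exact_mod_cast h2L
      calc Real.log n ≤ Real.log ((2:ℝ)^L) :=
            Real.log_le_log (by positivity) h2L'
      _ = (L:ℝ) * Real.log 2 := by rw [Real.log_pow]
    have hnL2 : (2:ℝ) ≤ (n:ℝ) * L := by
      have : (2:ℝ) ≤ (n:ℝ) := by exact_mod_cast hn
      have hL' : (1:ℝ) ≤ (L:ℝ) := by exact_mod_cast hL1
      nlinarith
    have hlog2 : Real.log 2 < 0.6931471808 := Real.log_two_lt_d9
    have hlog2pos : (0:ℝ) < Real.log 2 := Real.log_pos one_lt_two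
    have hstep2 : (n:ℝ) * ((L:ℝ) * Real.log 2) + 1/2 < (n:ℝ) * L := by
      nlinarith
    have hKρ : (n:ℝ)^2 * L < ((K:ℝ) + 1) * ρ := by
      have hKgt : (n:ℝ)^2 * L / ρ < (K:ℝ) + 1 := by
        have := Nat.lt_floor_add_one ((n:ℝ)^2 * L / ρ)
        rw [← hK] at this
        exact_mod_cast this
      rw [div_lt_iff₀ hρpos] at hKgt
      linarith
    have hstep3 : (n:ℝ) * L - 1/2 ≤ (K:ℝ) * (ρ/n) := by
      rw [show (K:ℝ) * (ρ/n) = ((K:ℝ) * ρ)/n by ring]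
      rw [le_div_iff₀ hnpos]
      have hρn2 : ρ ≤ (n:ℝ)/2 := by
        calc ρ ≤ 1 := hρ1
        _ ≤ (n:ℝ)/2 := by
            have : (2:ℝ) ≤ (n:ℝ) := by exact_mod_cast hn
            linarith
      nlinarith [hKρ]
    have hkey : (n:ℝ)^n < Real.exp ((K:ℝ) * (ρ/n)) := by
      rw [← Real.exp_log (show (0:ℝ) < (n:ℝ)^n by positivity)]
      refine Real.exp_lt_exp.2 ?_
      rw [Real.log_pow]
      have hstep1 : (n:ℝ) * Real.log n ≤ (n:ℝ) * ((L:ℝ) * Real.log 2) :=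
        mul_le_mul_of_nonneg_left hlogn hnpos.le
      linarith
    calc (1 - ρ/n)^K * (F.card : ℝ)
        ≤ Real.exp (-((K:ℝ) * (ρ/n))) * (n:ℝ)^n := by
          refine mul_le_mul (hexpK ▸ hpow) hFcard (by positivity) (Real.exp_pos _).le
    _ < Real.exp (-((K:ℝ) * (ρ/n))) * Real.exp ((K:ℝ) * (ρ/n)) :=
          mul_lt_mul_of_pos_left hkey (Real.exp_pos _)
    _ = 1 := by rw [← Real.exp_add, neg_add_cancel, Real.exp_zero]
  have hres0 : (F.filter (fun μ => ∀ A ∈ Q, A ∉ splitters n μ)).card = 0 := by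
    have : (F.filter (fun μ => ∀ A ∈ Q, A ∉ splitters n μ)).card < 1 := by
      exact_mod_cast hresidual
    omega
  have hhit : ∀ ν : Fin n → ℝ, IsDistribution ν → IsDyadic ν → NonConstant ν →
      ∃ A ∈ Q, A ∈ splitters n ν := by
    intro ν h1 h2 h3
    have hνF : ν ∈ F := Finset.mem_filter.2 ⟨mem_dyadicSet hn h1 h2 h3, h1, h2, h3⟩
    by_contra hcon
    push_neg at hcon
    have hmem : ν ∈ F.filter (fun μ => ∀ A ∈ Q, A ∉ splitters n μ) :=
      Finset.mem_filter.2 ⟨hνF, hcon⟩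
    rw [Finset.card_eq_zero.1 hres0] at hmem
    exact absurd hmem (Finset.notMem_empty ν)
  have hach := hitter_achieves hhit
  have hle : uOpt n 0 ≤ Q.card := Nat.sInf_le ⟨Q, rfl, hach⟩
  calc (uOpt n 0 : ℝ) ≤ (Q.card : ℝ) := by exact_mod_cast hle
  _ ≤ (K : ℝ) := by exact_mod_cast hQcard
  _ ≤ (n:ℝ)^2 * L / ρ := hKle
  _ = (n:ℝ)^2 * (L:ℝ) * (1/ρ) := by ring

end TQ


open TQ in
/-- With `M = 1/ρ_min(n)`: `M ≤ u_Opt(n,0) ≤ n²·⌈log₂ n⌉·M`. -/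
theorem uOpt_zero_vs_density (n : ℕ) (hn : 2 ≤ n) :
    1 / rhoMin n ≤ (uOpt n 0 : ℝ) ∧
    (uOpt n 0 : ℝ) ≤ (n : ℝ) ^ 2 * (Nat.clog 2 n : ℝ) * (1 / rhoMin n) := by
  exact ⟨uOpt_lower hn, uOpt_upper hn⟩
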